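/- arXiv:1708.09660 — 7 statements merged into one kernel-verified Lean document; each statement's English description precedes it below -/
import Mathlib

section
/- Let T₁, T₂, T₃, T₄ : I → Mₙ(ℂ) be differentiable and satisfy the full Nahm equations, let x ∈ ℝ³ with r² ≠ 0, and suppose Q(z) is invertible for every z ∈ I. Then d(Q⁻¹)/dz − [1₂⊗T₄, Q⁻¹] − (H+F)Q⁻¹ − Q⁻¹(H+F) = 1_{2n} on I. -/
open Matrix Kronecker

noncomputable section

attribute [local instance] Matrix.normedAddCommGroup Matrix.normedSpace

/-- n×n complex matrices. -/
abbrev Mat (n : ℕ) := Matrix (Fin n) (Fin n) ℂ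

/-- The Levi-Civita symbol on `Fin 3`, valued in `ℂ`. -/
def lev (i j k : Fin 3) : ℂ :=
  ((j.val : ℂ) - i.val) * ((k.val : ℂ) - j.val) * ((k.val : ℂ) - i.val) / 2

/-- The right-hand side of the full Nahm equations:
`[T₄, Tᵢ] + (1/2)·Σ_{j,k} ε_{ijk} [T_j, T_k]`. -/
def nahmRHS {n : ℕ} (T : Fin 3 → ℝ → Mat n) (T4 : ℝ → Mat n) (i : Fin 3) (z : ℝ) : Mat n :=
  (T4 z * T i z - T i z * T4 z) +
    (1 / 2 : ℂ) • ∑ j : Fin 3, ∑ k : Fin 3, lev i j k • (T j z * T k z - T k z * T j z)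

/-- 2n×2n complex matrices, indexed by `Fin 2 × Fin n`. -/
abbrev Mat2 (n : ℕ) := Matrix (Fin 2 × Fin n) (Fin 2 × Fin n) ℂ

/-- The Pauli matrices. -/
def σ : Fin 3 → Matrix (Fin 2) (Fin 2) ℂ :=
  ![!![0, 1; 1, 0], !![0, -Complex.I; Complex.I, 0], !![1, 0; 0, -1]]

/-- `r² = x₁² + x₂² + x₃²`. -/
def r2 (x : Fin 3 → ℝ) : ℝ := ∑ j : Fin 3, x j ^ 2

/-- `H = −Σ_j x_j σ_j ⊗ 1ₙ`. -/
def Hmat (n : ℕ) (x : Fin 3 → ℝ) : Mat2 n :=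
  -∑ j : Fin 3, (x j : ℂ) • (σ j ⊗ₖ (1 : Mat n))

/-- `F(z) = i·Σ_j σ_j ⊗ T_j(z)`. -/
def Fmat {n : ℕ} (T : Fin 3 → ℝ → Mat n) (z : ℝ) : Mat2 n :=
  Complex.I • ∑ j : Fin 3, σ j ⊗ₖ T j z

/-- `Q(z) = (1/r²)·H·F(z)·H − F(z)`. -/
def Qmat {n : ℕ} (x : Fin 3 → ℝ) (T : Fin 3 → ℝ → Mat n) (z : ℝ) : Mat2 n :=
  ((r2 x : ℂ))⁻¹ • (Hmat n x * Fmat T z * Hmat n x) - Fmat T z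

/-! ### Auxiliary lemmas -/

set_option linter.unusedSectionVars false
set_option linter.unreachableTactic false
set_option linter.unusedTactic false

section Aux

/-- Abstract algebra core: the `Q̇` identity. -/
theorem aux_ring_main {A : Type*} [Ring A] [Algebra ℂ A] (H K F Fd G t : A) (ρ : ℂ)
    (hKH : K * H = 1) (hHK : H * K = 1) (hHH : H * H = ρ • 1) (hρK : ρ • K = H)
    (ht : H * t = t * H) (htK : K * t = t * K) (hG : H * G = G * H)
    (hGK : K * G = G * K)
    (hFd : Fd = (t * F - F * t) - F * F - G) :
    K * Fd * H - Fd =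
      (t * (K * F * H - F) - (K * F * H - F) * t)
      - (H + F) * (K * F * H - F) - (K * F * H - F) * (H + F)
      - (K * F * H - F) * (K * F * H - F) := by
  have ht2 : ∀ x, H * (t * x) = t * (H * x) := fun x => by rw [← mul_assoc, ht, mul_assoc]
  have htK2 : ∀ x, K * (t * x) = t * (K * x) := fun x => by rw [← mul_assoc, htK, mul_assoc]
  have hG2 : ∀ x, H * (G * x) = G * (H * x) := fun x => by rw [← mul_assoc, hG, mul_assoc]
  have hGK2 : ∀ x, K * (G * x) = G * (K * x) := fun x => by rw [← mul_assoc, hGK, mul_assoc]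
  have hKH2 : ∀ x, K * (H * x) = x := fun x => by rw [← mul_assoc, hKH, one_mul]
  have hHK2 : ∀ x, H * (K * x) = x := fun x => by rw [← mul_assoc, hHK, one_mul]
  have hHH2 : ∀ x, H * (H * x) = ρ • x := fun x => by
    rw [← mul_assoc, hHH, smul_mul_assoc, one_mul]
  have hρK2 : ∀ x, ρ • (K * x) = H * x := fun x => by rw [← smul_mul_assoc, hρK]
  simp only [hFd, mul_add, add_mul, mul_sub, sub_mul, mul_assoc, mul_one, one_mul,
    mul_smul_comm, smul_mul_assoc,
    ht2, htK2, hG2, hGK2, hKH2, hHK2, hHH2, hρK2, ht, htK, hG, hGK, hKH, hHK, hHH, hρK]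
  abel

/-- Abstract algebra: the final inverse identity. -/
theorem aux_ring_final {A : Type*} [Ring A] (Q R Qd t M : A)
    (hRQ : R * Q = 1) (hQR : Q * R = 1)
    (hQd : Qd = (t * Q - Q * t) - M * Q - Q * M - Q * Q) :
    -(R * Qd * R) - (t * R - R * t) - M * R - R * M = 1 := by
  have hRQ2 : ∀ x, R * (Q * x) = x := fun x => by rw [← mul_assoc, hRQ, one_mul]
  have hQR2 : ∀ x, Q * (R * x) = x := fun x => by rw [← mul_assoc, hQR, one_mul]
  simp only [hQd, mul_add, add_mul, mul_sub, sub_mul, mul_assoc, mul_one, one_mul,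
    hRQ2, hQR2, hRQ, hQR]
  abel

open Complex in
lemma aux_pauli_table :
    (σ 0 * σ 0 = 1 ∧ σ 1 * σ 1 = 1 ∧ σ 2 * σ 2 = 1) ∧
    (σ 0 * σ 1 = I • σ 2 ∧ σ 1 * σ 0 = -(I • σ 2)) ∧
    (σ 1 * σ 2 = I • σ 0 ∧ σ 2 * σ 1 = -(I • σ 0)) ∧
    (σ 2 * σ 0 = I • σ 1 ∧ σ 0 * σ 2 = -(I • σ 1)) := by
  refine ⟨⟨?_, ?_, ?_⟩, ⟨?_, ?_⟩, ⟨?_, ?_⟩, ⟨?_, ?_⟩⟩ <;>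
    · ext i j
      fin_cases i <;> fin_cases j <;>
        simp [σ, Matrix.mul_apply, Fin.sum_univ_two, Complex.ext_iff]

lemma aux_kron_sub {l m p q : Type*} {R : Type*} [Ring R] (A : Matrix l m R) (B C : Matrix p q R) :
    A ⊗ₖ (B - C) = A ⊗ₖ B - A ⊗ₖ C := by
  ext ⟨i, a⟩ ⟨j, b⟩; simp [Matrix.kroneckerMap_apply, mul_sub]

lemma aux_neg_kron {l m p q : Type*} {R : Type*} [Ring R] (A : Matrix l m R) (B : Matrix p q R) :
    (-A) ⊗ₖ B = -(A ⊗ₖ B) := by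
  ext ⟨i, a⟩ ⟨j, b⟩; simp [Matrix.kroneckerMap_apply]

lemma aux_kron_add {l m p q : Type*} {R : Type*} [Ring R] (A : Matrix l m R) (B C : Matrix p q R) :
    A ⊗ₖ (B + C) = A ⊗ₖ B + A ⊗ₖ C := by
  ext ⟨i, a⟩ ⟨j, b⟩; simp [Matrix.kroneckerMap_apply, mul_add]

/-- The Pauli-algebra computation: the quadratic Nahm term versus `−F²−G`. -/
lemma aux_Fsq {n : ℕ} (A : Fin 3 → Mat n) :
    Complex.I • ∑ i : Fin 3, σ i ⊗ₖ ((1/2 : ℂ) • ∑ j : Fin 3, ∑ k : Fin 3,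
        lev i j k • (A j * A k - A k * A j))
      = -((Complex.I • ∑ j : Fin 3, σ j ⊗ₖ A j) * (Complex.I • ∑ j : Fin 3, σ j ⊗ₖ A j))
        - ∑ j : Fin 3, (1 : Matrix (Fin 2) (Fin 2) ℂ) ⊗ₖ (A j * A j) := by
  obtain ⟨⟨h00, h11, h22⟩, ⟨h01, h10⟩, ⟨h12, h21⟩, ⟨h20, h02⟩⟩ := aux_pauli_table
  have hB0 : (1/2 : ℂ) • ∑ j : Fin 3, ∑ k : Fin 3, lev 0 j k • (A j * A k - A k * A j)
      = A 1 * A 2 - A 2 * A 1 := by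
    simp only [Fin.sum_univ_three, lev]; norm_num; module
  have hB1 : (1/2 : ℂ) • ∑ j : Fin 3, ∑ k : Fin 3, lev 1 j k • (A j * A k - A k * A j)
      = A 2 * A 0 - A 0 * A 2 := by
    simp only [Fin.sum_univ_three, lev]; norm_num; module
  have hB2 : (1/2 : ℂ) • ∑ j : Fin 3, ∑ k : Fin 3, lev 2 j k • (A j * A k - A k * A j)
      = A 0 * A 1 - A 1 * A 0 := by
    simp only [Fin.sum_univ_three, lev]; norm_num; module
  rw [Fin.sum_univ_three]; rw [hB0, hB1, hB2]
  rw [smul_mul_smul_comm, Complex.I_mul_I]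
  simp only [Fin.sum_univ_three, add_mul, mul_add, ← Matrix.mul_kronecker_mul,
    h00, h11, h22, h01, h10, h12, h21, h20, h02, smul_kronecker,
    aux_kron_sub, aux_neg_kron, one_kronecker_one, neg_smul, one_smul]
  module

variable {m : Type*} [Fintype m] [DecidableEq m]

lemma aux_entry_hasDerivAt {f : ℝ → Matrix m m ℂ} {f' : Matrix m m ℂ} {z : ℝ}
    (hf : HasDerivAt f f' z) (i j : m) :
    HasDerivAt (fun w => f w i j) (f' i j) z :=
  hasDerivAt_pi.1 (hasDerivAt_pi.1 hf i) j

lemma aux_matrix_hasDerivAt {f : ℝ → Matrix m m ℂ} {f' : Matrix m m ℂ} {z : ℝ}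
    (h : ∀ i j, HasDerivAt (fun w => f w i j) (f' i j) z) : HasDerivAt f f' z :=
  hasDerivAt_pi.2 fun i => hasDerivAt_pi.2 fun j => h i j

lemma aux_hasDerivAt_matmul {f g : ℝ → Matrix m m ℂ} {f' g' : Matrix m m ℂ} {z : ℝ}
    (hf : HasDerivAt f f' z) (hg : HasDerivAt g g' z) :
    HasDerivAt (fun w => f w * g w) (f' * g z + f z * g') z := by
  refine aux_matrix_hasDerivAt fun i j => ?_
  have h1 : HasDerivAt (fun w => ∑ k, f w i k * g w k j)
      (∑ k, (f' i k * g z k j + f z i k * g' k j)) z :=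
    HasDerivAt.fun_sum fun k _ => (aux_entry_hasDerivAt hf i k).mul (aux_entry_hasDerivAt hg k j)
  have h2 : (fun w => (f w * g w) i j) = fun w => ∑ k, f w i k * g w k j := by
    funext w; rw [Matrix.mul_apply]
  rw [h2, show (f' * g z + f z * g') i j = ∑ k, (f' i k * g z k j + f z i k * g' k j) by
    simp [Matrix.mul_apply, Matrix.add_apply, Finset.sum_add_distrib]]
  exact h1

lemma aux_diffAt_det {f : ℝ → Matrix m m ℂ} {z : ℝ}
    (hf : ∀ i j, DifferentiableAt ℝ (fun w => f w i j) z) :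
    DifferentiableAt ℝ (fun w => (f w).det) z := by
  have h : (fun w => (f w).det)
      = fun w => ∑ τ : Equiv.Perm m, (Equiv.Perm.sign τ : ℤ) * ∏ i, f w (τ i) i := by
    funext w; rw [Matrix.det_apply']
  rw [h]
  exact DifferentiableAt.fun_sum fun τ _ =>
    (DifferentiableAt.fun_finsetProd fun i _ => hf (τ i) i).const_mul _

lemma aux_hasDerivAt_inv_matrix {f : ℝ → Matrix m m ℂ} {f' : Matrix m m ℂ} {z : ℝ}
    (hf : HasDerivAt f f' z) (hu : IsUnit (f z)) :
    HasDerivAt (fun w => (f w)⁻¹) (-((f z)⁻¹ * f' * (f z)⁻¹)) z := by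
  have hent : ∀ i j, DifferentiableAt ℝ (fun w => f w i j) z := fun i j =>
    (aux_entry_hasDerivAt hf i j).differentiableAt
  have hdet : DifferentiableAt ℝ (fun w => (f w).det) z := aux_diffAt_det hent
  have hdz : (f z).det ≠ 0 := by
    have := (Matrix.isUnit_iff_isUnit_det (f z)).1 hu
    exact isUnit_iff_ne_zero.1 this
  have hadj : ∀ i j, DifferentiableAt ℝ (fun w => (f w).adjugate i j) z := by
    intro i j
    have h : (fun w => (f w).adjugate i j)
        = fun w => ((f w).updateRow j (Pi.single i 1)).det := by
      funext w; rw [Matrix.adjugate_apply]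
    rw [h]
    refine aux_diffAt_det fun a b => ?_
    simp only [Matrix.updateRow_apply]
    split_ifs
    · exact differentiableAt_const _
    · exact hent a b
  have hR : DifferentiableAt ℝ (fun w => (f w)⁻¹) z := by
    rw [show (fun w => (f w)⁻¹) = fun w => ((f w).det)⁻¹ • (f w).adjugate from
      funext fun w => by rw [Matrix.inv_def, Ring.inverse_eq_inv]]
    refine differentiableAt_pi.2 fun i => differentiableAt_pi.2 fun j => ?_
    simp only [Matrix.smul_apply, smul_eq_mul]
    exact (hdet.inv hdz).mul (hadj i j)
  have hD := hR.hasDerivAt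
  set D := deriv (fun w => (f w)⁻¹) z with hDdef
  have hev : (fun w => f w * (f w)⁻¹) =ᶠ[nhds z] fun _ => 1 := by
    filter_upwards [hdet.continuousAt.eventually_ne hdz] with w hw
    exact Matrix.mul_nonsing_inv _ (isUnit_iff_ne_zero.2 hw)
  have h0 : HasDerivAt (fun w => f w * (f w)⁻¹) 0 z :=
    (hasDerivAt_const z (1 : Matrix m m ℂ)).congr_of_eventuallyEq hev
  have heq : f' * (f z)⁻¹ + f z * D = 0 := (aux_hasDerivAt_matmul hf hD).unique h0
  have hinv : (f z)⁻¹ * f z = 1 := Matrix.nonsing_inv_mul _ (isUnit_iff_ne_zero.2 hdz)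
  have hDval : D = -((f z)⁻¹ * f' * (f z)⁻¹) := by
    have h3 : f z * D = -(f' * (f z)⁻¹) := by
      rw [eq_neg_iff_add_eq_zero, add_comm]; exact heq
    calc D = ((f z)⁻¹ * f z) * D := by rw [hinv, one_mul]
    _ = (f z)⁻¹ * (f z * D) := by rw [mul_assoc]
    _ = (f z)⁻¹ * -(f' * (f z)⁻¹) := by rw [h3]
    _ = -((f z)⁻¹ * f' * (f z)⁻¹) := by rw [mul_neg, mul_assoc]
  rw [← hDval]; exact hD

lemma aux_hasDerivAt_const_mul (A : Matrix m m ℂ) {f : ℝ → Matrix m m ℂ}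
    {f' : Matrix m m ℂ} {z : ℝ} (hf : HasDerivAt f f' z) :
    HasDerivAt (fun w => A * f w) (A * f') z := by
  exact
    ((LinearMap.mulLeft ℂ A).toContinuousLinearMap.restrictScalars ℝ).hasFDerivAt.comp_hasDerivAt
      z hf

lemma aux_hasDerivAt_mul_const (A : Matrix m m ℂ) {f : ℝ → Matrix m m ℂ}
    {f' : Matrix m m ℂ} {z : ℝ} (hf : HasDerivAt f f' z) :
    HasDerivAt (fun w => f w * A) (f' * A) z := by
  exact
    ((LinearMap.mulRight ℂ A).toContinuousLinearMap.restrictScalars ℝ).hasFDerivAt.comp_hasDerivAt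
      z hf

lemma aux_hasDerivAt_kron {n : ℕ} (P : Matrix (Fin 2) (Fin 2) ℂ) {f : ℝ → Mat n}
    {f' : Mat n} {z : ℝ} (hf : HasDerivAt f f' z) :
    HasDerivAt (fun w => P ⊗ₖ f w) (P ⊗ₖ f') z := by
  refine aux_matrix_hasDerivAt fun p q => ?_
  simp only [Matrix.kroneckerMap_apply]
  exact (aux_entry_hasDerivAt hf p.2 q.2).const_mul _

/-- Structure of `H` as a Kronecker product. -/
lemma aux_H_kron (n : ℕ) (x : Fin 3 → ℝ) :
    Hmat n x = (-∑ j : Fin 3, (x j : ℂ) • σ j) ⊗ₖ (1 : Mat n) := by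
  simp only [Hmat, Fin.sum_univ_three, aux_neg_kron, add_kronecker, smul_kronecker, neg_add]

lemma aux_SS (x : Fin 3 → ℝ) :
    (-∑ j : Fin 3, (x j : ℂ) • σ j) * (-∑ j : Fin 3, (x j : ℂ) • σ j)
      = ((r2 x : ℝ) : ℂ) • (1 : Matrix (Fin 2) (Fin 2) ℂ) := by
  ext i j
  fin_cases i <;> fin_cases j <;>
    simp [σ, r2, Fin.sum_univ_three, Matrix.mul_apply, Fin.sum_univ_two, Complex.ext_iff,
      ← Complex.ofReal_pow] <;>
    first | (constructor <;> ring) | ring | simp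

lemma aux_HH (n : ℕ) (x : Fin 3 → ℝ) :
    Hmat n x * Hmat n x = ((r2 x : ℝ) : ℂ) • (1 : Mat2 n) := by
  rw [aux_H_kron, ← Matrix.mul_kronecker_mul, aux_SS, one_mul, smul_kronecker,
    one_kronecker_one]

lemma aux_H_comm (n : ℕ) (x : Fin 3 → ℝ) (M : Mat n) :
    Hmat n x * ((1 : Matrix (Fin 2) (Fin 2) ℂ) ⊗ₖ M)
      = ((1 : Matrix (Fin 2) (Fin 2) ℂ) ⊗ₖ M) * Hmat n x := by
  rw [aux_H_kron, ← Matrix.mul_kronecker_mul, ← Matrix.mul_kronecker_mul, one_mul, mul_one,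
    one_mul, mul_one]

end Aux

section Core

theorem aux_main_core {n : ℕ} (I : Set ℝ) (T1 T2 T3 T4 : ℝ → Mat n)
    (hnahm : ∀ z ∈ I, ∀ i : Fin 3,
      HasDerivAt (![T1, T2, T3] i) (nahmRHS ![T1, T2, T3] T4 i z) z)
    (x : Fin 3 → ℝ) (hx : r2 x ≠ 0)
    (hQ : ∀ z ∈ I, IsUnit (Qmat x ![T1, T2, T3] z)) (z : ℝ) (hz : z ∈ I) :
    ∃ Q' : Mat2 n,
      HasDerivAt (fun w => (Qmat x ![T1, T2, T3] w)⁻¹) Q' z ∧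
      Q' - (((1 : Matrix (Fin 2) (Fin 2) ℂ) ⊗ₖ T4 z) * (Qmat x ![T1, T2, T3] z)⁻¹
            - (Qmat x ![T1, T2, T3] z)⁻¹ * ((1 : Matrix (Fin 2) (Fin 2) ℂ) ⊗ₖ T4 z))
          - (Hmat n x + Fmat ![T1, T2, T3] z) * (Qmat x ![T1, T2, T3] z)⁻¹
          - (Qmat x ![T1, T2, T3] z)⁻¹ * (Hmat n x + Fmat ![T1, T2, T3] z)
        = (1 : Mat2 n) := by
  set T : Fin 3 → ℝ → Mat n := ![T1, T2, T3] with hTdef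
  set Hm : Mat2 n := Hmat n x with hHm
  set Fz : Mat2 n := Fmat T z with hFz
  set t : Mat2 n := (1 : Matrix (Fin 2) (Fin 2) ℂ) ⊗ₖ T4 z with htdef
  set ρ : ℂ := ((r2 x : ℝ) : ℂ) with hρdef
  set c : ℂ := ρ⁻¹ with hcdef
  set K : Mat2 n := c • Hm with hKdef
  set G : Mat2 n := ∑ j : Fin 3, (1 : Matrix (Fin 2) (Fin 2) ℂ) ⊗ₖ (T j z * T j z) with hGdef
  set F' : Mat2 n := Complex.I • ∑ j : Fin 3, σ j ⊗ₖ nahmRHS T T4 j z with hF'def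
  have hρ0 : ρ ≠ 0 := Complex.ofReal_ne_zero.2 hx
  have hHH : Hm * Hm = ρ • (1 : Mat2 n) := aux_HH n x
  have hKH : K * Hm = 1 := by
    rw [hKdef, smul_mul_assoc, hHH, smul_smul, hcdef, inv_mul_cancel₀ hρ0, one_smul]
  have hHK : Hm * K = 1 := by
    rw [hKdef, mul_smul_comm, hHH, smul_smul, hcdef, inv_mul_cancel₀ hρ0, one_smul]
  have hρK : ρ • K = Hm := by
    rw [hKdef, smul_smul, hcdef, mul_inv_cancel₀ hρ0, one_smul]
  have ht : Hm * t = t * Hm := aux_H_comm n x (T4 z)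
  have htK : K * t = t * K := by rw [hKdef, smul_mul_assoc, ht, mul_smul_comm]
  have hGH : Hm * G = G * Hm := by
    rw [hGdef, Finset.mul_sum, Finset.sum_mul]
    exact Finset.sum_congr rfl fun j _ => aux_H_comm n x _
  have hGK : K * G = G * K := by rw [hKdef, smul_mul_assoc, hGH, mul_smul_comm]
  -- derivative of F
  have hFder : HasDerivAt (Fmat T) F' z := by
    have hs : HasDerivAt (fun w => ∑ j : Fin 3, σ j ⊗ₖ T j w)
        (∑ j : Fin 3, σ j ⊗ₖ nahmRHS T T4 j z) z :=
      HasDerivAt.fun_sum fun j _ => aux_hasDerivAt_kron (σ j) (hnahm z hz j)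
    exact hs.const_smul Complex.I
  -- derivative of Q
  set Qd : Mat2 n := c • (Hm * F' * Hm) - F' with hQddef
  have hQder : HasDerivAt (Qmat x T) Qd z := by
    have s1 := aux_hasDerivAt_const_mul Hm hFder
    have s2 := aux_hasDerivAt_mul_const Hm s1
    have s3 := s2.const_smul c
    have s4 := s3.sub hFder
    exact s4
  -- F' in algebraic form
  have hF'eq : F' = (t * Fz - Fz * t) - Fz * Fz - G := by
    have hsplit : F' = (Complex.I • ∑ j : Fin 3, σ j ⊗ₖ (T4 z * T j z - T j z * T4 z))
        + (Complex.I • ∑ j : Fin 3, σ j ⊗ₖ ((1/2 : ℂ) • ∑ k : Fin 3, ∑ l : Fin 3,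
            lev j k l • (T k z * T l z - T l z * T k z))) := by
      rw [hF'def]
      simp only [nahmRHS, aux_kron_add, Finset.sum_add_distrib, smul_add]
    have hcomm : Complex.I • ∑ j : Fin 3, σ j ⊗ₖ (T4 z * T j z - T j z * T4 z)
        = t * Fz - Fz * t := by
      rw [hFz, htdef]
      simp only [Fmat, Finset.mul_sum, Finset.sum_mul, mul_smul_comm, smul_mul_assoc,
        ← Matrix.mul_kronecker_mul, one_mul, mul_one, aux_kron_sub, smul_sub,
        Finset.sum_sub_distrib]
    have hsq : Complex.I • ∑ j : Fin 3, σ j ⊗ₖ ((1/2 : ℂ) • ∑ k : Fin 3, ∑ l : Fin 3,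
          lev j k l • (T k z * T l z - T l z * T k z))
        = -(Fz * Fz) - G := by
      rw [hFz, hGdef]
      simp only [Fmat]
      exact aux_Fsq (fun j => T j z)
    rw [hsplit, hcomm, hsq]
    abel
  -- Q in algebraic form
  have hQform : Qmat x T z = K * Fz * Hm - Fz := by
    rw [Qmat, hKdef, smul_mul_assoc, smul_mul_assoc, ← hρdef, ← hcdef, ← hHm, ← hFz]
  have hQdform : Qd = K * F' * Hm - F' := by
    rw [hQddef, hKdef, smul_mul_assoc, smul_mul_assoc]
  -- the Q̇ identity
  have hmain := aux_ring_main Hm K Fz F' G t ρ hKH hHK hHH hρK ht htK hGH hGK hF'eq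
  have hQd_eq : Qd = (t * Qmat x T z - Qmat x T z * t)
      - (Hm + Fz) * Qmat x T z - Qmat x T z * (Hm + Fz) - Qmat x T z * Qmat x T z := by
    rw [hQdform, hQform]; exact hmain
  -- inverse derivative
  have hu : IsUnit (Qmat x T z) := hQ z hz
  have hinv := aux_hasDerivAt_inv_matrix hQder hu
  have hud : (Qmat x T z).det ≠ 0 :=
    isUnit_iff_ne_zero.1 ((Matrix.isUnit_iff_isUnit_det _).1 hu)
  have hRQ : (Qmat x T z)⁻¹ * Qmat x T z = 1 :=
    Matrix.nonsing_inv_mul _ (isUnit_iff_ne_zero.2 hud)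
  have hQR : Qmat x T z * (Qmat x T z)⁻¹ = 1 :=
    Matrix.mul_nonsing_inv _ (isUnit_iff_ne_zero.2 hud)
  refine ⟨-((Qmat x T z)⁻¹ * Qd * (Qmat x T z)⁻¹), hinv, ?_⟩
  exact aux_ring_final (Qmat x T z) (Qmat x T z)⁻¹ Qd t (Hm + Fz) hRQ hQR hQd_eq

end Core

/-- Panagopoulos, Proposition `panagopo1`: with Nahm data satisfying the full Nahm
equations, `x ∈ ℝ³` with `r² ≠ 0`, and `Q(z)` invertible on `I`, one has
`d(Q⁻¹)/dz − [1₂⊗T₄, Q⁻¹] − (H+F)Q⁻¹ − Q⁻¹(H+F) = 1_{2n}` on `I`. -/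
theorem Qinv_identity {n : ℕ} (I : Set ℝ) (T1 T2 T3 T4 : ℝ → Mat n)
    (hd4 : ∀ z ∈ I, DifferentiableAt ℝ T4 z)
    (hnahm : ∀ z ∈ I, ∀ i : Fin 3,
      HasDerivAt (![T1, T2, T3] i) (nahmRHS ![T1, T2, T3] T4 i z) z)
    (x : Fin 3 → ℝ) (hx : r2 x ≠ 0)
    (hQ : ∀ z ∈ I, IsUnit (Qmat x ![T1, T2, T3] z)) :
    let T : Fin 3 → ℝ → Mat n := ![T1, T2, T3]
    let H : Mat2 n := Hmat n x
    let T4h : ℝ → Mat2 n := fun z => (1 : Matrix (Fin 2) (Fin 2) ℂ) ⊗ₖ T4 z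
    ∀ z ∈ I, ∃ Q' : Mat2 n,
      HasDerivAt (fun w => (Qmat x T w)⁻¹) Q' z ∧
      Q' - (T4h z * (Qmat x T z)⁻¹ - (Qmat x T z)⁻¹ * T4h z)
          - (H + Fmat T z) * (Qmat x T z)⁻¹ - (Qmat x T z)⁻¹ * (H + Fmat T z)
        = (1 : Mat2 n) := by
  intro T H T4h z hz
  exact aux_main_core I T1 T2 T3 T4 hnahm x hx hQ z hz
end
end

section
/- Let T₁, T₂, T₃, T₄ : I → Mₙ(ℂ) be differentiable with Tⱼ† = −Tⱼ for j = 1,2,3,4, satisfying the full Nahm equations, let x ∈ ℝ³ with r² ≠ 0 and x₄ ∈ ℝ, and suppose Q(z) is invertible for every z ∈ I. If v_a, v_b : I → ℂ^{2n} are differentiable solutions of the Weyl equation Δ†v = 0, then for all z ∈ I: d/dz ( v_a(z)† Q(z)⁻¹ v_b(z) ) = v_a(z)† v_b(z). -/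
open Matrix Kronecker

noncomputable section

attribute [local instance] Matrix.normedAddCommGroup Matrix.normedSpace

/-! ### Auxiliary lemmas -/

section Pauli

lemma sigma00 : σ 0 * σ 0 = 1 := by
  ext i j; fin_cases i <;> fin_cases j <;> simp [σ, Matrix.mul_apply, Fin.sum_univ_two]
lemma sigma01 : σ 0 * σ 1 = Complex.I • σ 2 := by
  ext i j; fin_cases i <;> fin_cases j <;> simp [σ, Matrix.mul_apply, Fin.sum_univ_two]
lemma sigma02 : σ 0 * σ 2 = (-Complex.I) • σ 1 := by
  ext i j; fin_cases i <;> fin_cases j <;> simp [σ, Matrix.mul_apply, Fin.sum_univ_two]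
lemma sigma10 : σ 1 * σ 0 = (-Complex.I) • σ 2 := by
  ext i j; fin_cases i <;> fin_cases j <;> simp [σ, Matrix.mul_apply, Fin.sum_univ_two]
lemma sigma11 : σ 1 * σ 1 = 1 := by
  ext i j; fin_cases i <;> fin_cases j <;> simp [σ, Matrix.mul_apply, Fin.sum_univ_two]
lemma sigma12 : σ 1 * σ 2 = Complex.I • σ 0 := by
  ext i j; fin_cases i <;> fin_cases j <;> simp [σ, Matrix.mul_apply, Fin.sum_univ_two]
lemma sigma20 : σ 2 * σ 0 = Complex.I • σ 1 := by
  ext i j; fin_cases i <;> fin_cases j <;> simp [σ, Matrix.mul_apply, Fin.sum_univ_two]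
lemma sigma21 : σ 2 * σ 1 = (-Complex.I) • σ 0 := by
  ext i j; fin_cases i <;> fin_cases j <;> simp [σ, Matrix.mul_apply, Fin.sum_univ_two]
lemma sigma22 : σ 2 * σ 2 = 1 := by
  ext i j; fin_cases i <;> fin_cases j <;> simp [σ, Matrix.mul_apply, Fin.sum_univ_two]
lemma sigmaH (j : Fin 3) : (σ j)ᴴ = σ j := by
  fin_cases j <;> (ext i k; fin_cases i <;> fin_cases k <;> simp [σ])

end Pauli

section KroneckerAux

variable {l m p q : Type*}

lemma kron_sub (A : Matrix l m ℂ) (B C : Matrix p q ℂ) :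
    A ⊗ₖ (B - C) = A ⊗ₖ B - A ⊗ₖ C := by
  ext ⟨i,j⟩ ⟨k,r⟩; simp [kroneckerMap_apply, mul_sub]

lemma kron_neg (A : Matrix l m ℂ) (B : Matrix p q ℂ) :
    A ⊗ₖ (-B) = -(A ⊗ₖ B) := by
  ext ⟨i,j⟩ ⟨k,r⟩; simp [kroneckerMap_apply]

lemma kron_conjTranspose (A : Matrix l m ℂ) (B : Matrix p q ℂ) :
    (A ⊗ₖ B)ᴴ = Aᴴ ⊗ₖ Bᴴ := by
  ext ⟨i,j⟩ ⟨k,r⟩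
  simp [conjTranspose_apply, kroneckerMap_apply, mul_comm]

end KroneckerAux

section HLemmas

variable {n : ℕ} (x : Fin 3 → ℝ)

lemma H_herm : (Hmat n x)ᴴ = Hmat n x := by
  simp [Hmat, conjTranspose_sum, kron_conjTranspose, sigmaH, conjTranspose_smul]

lemma H_comm (M : Mat n) :
    Hmat n x * ((1 : Matrix (Fin 2) (Fin 2) ℂ) ⊗ₖ M)
      = ((1 : Matrix (Fin 2) (Fin 2) ℂ) ⊗ₖ M) * Hmat n x := by
  simp only [Hmat, neg_mul, mul_neg, Finset.sum_mul, Finset.mul_sum, smul_mul_assoc,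
    mul_smul_comm, ← mul_kronecker_mul, one_mul, mul_one]

lemma H_sq : Hmat n x * Hmat n x = ((r2 x : ℂ)) • (1 : Mat2 n) := by
  have hr : ((r2 x : ℂ)) = (x 0 : ℂ)^2 + (x 1 : ℂ)^2 + (x 2 : ℂ)^2 := by
    push_cast [r2, Fin.sum_univ_three]; ring
  simp only [Hmat, Fin.sum_univ_three, neg_mul, mul_neg, neg_neg, add_mul, mul_add,
    smul_mul_assoc, mul_smul_comm, ← mul_kronecker_mul, mul_one,
    sigma00, sigma01, sigma02, sigma10, sigma11, sigma12, sigma20, sigma21, sigma22, hr,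
    ← one_kronecker_one (α := ℂ)]
  simp only [smul_kronecker, smul_smul]
  module

end HLemmas

section LevVals

lemma lev_vals : lev 0 1 2 = 1 ∧ lev 0 2 1 = -1 ∧ lev 1 0 2 = -1 ∧ lev 1 2 0 = 1
    ∧ lev 2 0 1 = 1 ∧ lev 2 1 0 = -1 := by
  norm_num [lev]

lemma lev_zero : lev 0 0 0 = 0 ∧ lev 0 0 1 = 0 ∧ lev 0 0 2 = 0 ∧ lev 0 1 0 = 0 ∧ lev 0 1 1 = 0
    ∧ lev 0 2 0 = 0 ∧ lev 0 2 2 = 0 ∧ lev 1 0 0 = 0 ∧ lev 1 0 1 = 0 ∧ lev 1 1 0 = 0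
    ∧ lev 1 1 1 = 0 ∧ lev 1 1 2 = 0 ∧ lev 1 2 1 = 0 ∧ lev 1 2 2 = 0 ∧ lev 2 0 0 = 0
    ∧ lev 2 0 2 = 0 ∧ lev 2 1 1 = 0 ∧ lev 2 1 2 = 0 ∧ lev 2 2 0 = 0 ∧ lev 2 2 1 = 0
    ∧ lev 2 2 2 = 0 := by
  norm_num [lev]

end LevVals

/-- The value of `dF/dz` dictated by the Nahm equations. -/
def Fder {n : ℕ} (T : Fin 3 → ℝ → Mat n) (T4 : ℝ → Mat n) (z : ℝ) : Mat2 n :=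
  Complex.I • ∑ l : Fin 3, σ l ⊗ₖ nahmRHS T T4 l z

/-- The value of `dQ/dz` dictated by the Nahm equations. -/
def Qder {n : ℕ} (x : Fin 3 → ℝ) (T : Fin 3 → ℝ → Mat n) (T4 : ℝ → Mat n) (z : ℝ) : Mat2 n :=
  ((r2 x : ℂ))⁻¹ • (Hmat n x * Fder T T4 z * Hmat n x) - Fder T T4 z

section CoreId

variable {n : ℕ}

/-- The core Pauli-algebra consequence of the Nahm equations. -/
lemma core_identity (T : Fin 3 → ℝ → Mat n) (T4 : ℝ → Mat n) (z : ℝ) :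
    ((1 : Matrix (Fin 2) (Fin 2) ℂ) ⊗ₖ T4 z) * Fmat T z
        - Fmat T z * ((1 : Matrix (Fin 2) (Fin 2) ℂ) ⊗ₖ T4 z) - Fder T T4 z
      = Fmat T z * Fmat T z
        + (1 : Matrix (Fin 2) (Fin 2) ℂ) ⊗ₖ (T 0 z * T 0 z + T 1 z * T 1 z + T 2 z * T 2 z) := by
  obtain ⟨a,b,c,d,e,f⟩ := lev_vals
  obtain ⟨z1,z2,z3,z4,z5,z6,z7,z8,z9,z10,z11,z12,z13,z14,z15,z16,z17,z18,z19,z20,z21⟩ := lev_zero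
  simp only [Fmat, Fder, nahmRHS, Fin.sum_univ_three, a, b, c, d, e, f,
    z1,z2,z3,z4,z5,z6,z7,z8,z9,z10,z11,z12,z13,z14,z15,z16,z17,z18,z19,z20,z21,
    zero_smul, one_smul, neg_one_smul, add_zero, zero_add, neg_sub,
    smul_mul_assoc, mul_smul_comm, mul_add, add_mul, sub_mul, mul_sub,
    ← mul_kronecker_mul, one_mul, mul_one,
    sigma00, sigma01, sigma02, sigma10, sigma11, sigma12, sigma20, sigma21, sigma22,
    kron_sub, kronecker_add, kronecker_smul, smul_kronecker, smul_smul, smul_add, smul_sub,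
    Complex.I_mul_I]
  match_scalars <;> simp [pow_succ, Complex.I_mul_I] <;> ring

/-- The main algebraic identity `A Q + Q Aᴴ − Q' = Q²` (with the second factor written out). -/
lemma main_identity (x : Fin 3 → ℝ) (hx' : (r2 x : ℂ) ≠ 0) (x4 : ℝ)
    (T : Fin 3 → ℝ → Mat n) (T4 : ℝ → Mat n) (z : ℝ) :
    ((Complex.I * (x4 : ℂ)) • (1 : Mat2 n) + (1 : Matrix (Fin 2) (Fin 2) ℂ) ⊗ₖ T4 z
        - (Hmat n x + Fmat T z)) * Qmat x T z
      + Qmat x T z * ((-(Complex.I * (x4 : ℂ))) • (1 : Mat2 n)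
          - (1 : Matrix (Fin 2) (Fin 2) ℂ) ⊗ₖ T4 z - (Hmat n x + Fmat T z))
      - Qder x T T4 z
    = Qmat x T z * Qmat x T z := by
  set H := Hmat n x with hH
  set F := Fmat T z with hF
  set K := (1 : Matrix (Fin 2) (Fin 2) ℂ) ⊗ₖ T4 z with hKdef
  set M1 := (1 : Matrix (Fin 2) (Fin 2) ℂ) ⊗ₖ (T 0 z * T 0 z + T 1 z * T 1 z + T 2 z * T 2 z)
    with hM1def
  have hF' : Fder T T4 z = K * F - F * K - (F * F + M1) := by
    rw [← core_identity T T4 z]; abel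
  have hH2 : H * H = (r2 x : ℂ) • (1 : Mat2 n) := H_sq x
  have hK : H * K = K * H := H_comm x _
  have hM : H * M1 = M1 * H := H_comm x _
  have hH2' : ∀ Y : Mat2 n, H * (H * Y) = (r2 x : ℂ) • Y := by
    intro Y; rw [← mul_assoc, hH2, smul_mul_assoc, one_mul]
  have hK' : ∀ Y : Mat2 n, H * (K * Y) = K * (H * Y) := by
    intro Y; rw [← mul_assoc, hK, mul_assoc]
  have hM' : ∀ Y : Mat2 n, H * (M1 * Y) = M1 * (H * Y) := by
    intro Y; rw [← mul_assoc, hM, mul_assoc]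
  simp only [Qmat, Qder, ← hH, ← hF, hF', mul_add, add_mul, mul_sub, sub_mul,
    smul_mul_assoc, mul_smul_comm, smul_sub, smul_add, smul_smul, mul_assoc, mul_one, one_mul,
    hH2', hK', hM', hH2, hK, hM]
  match_scalars <;> field_simp <;> ring

/-- Conjugate transpose of the Weyl operator matrix. -/
lemma weyl_herm (x : Fin 3 → ℝ) (x4 : ℝ) (T : Fin 3 → ℝ → Mat n) (T4 : ℝ → Mat n) (z : ℝ)
    (hsk : ∀ j : Fin 3, (T j z)ᴴ = -(T j z)) (h4 : (T4 z)ᴴ = -(T4 z)) :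
    ((Complex.I * (x4 : ℂ)) • (1 : Mat2 n) + (1 : Matrix (Fin 2) (Fin 2) ℂ) ⊗ₖ T4 z
        - (Hmat n x + Fmat T z))ᴴ
      = (-(Complex.I * (x4 : ℂ))) • (1 : Mat2 n)
          - (1 : Matrix (Fin 2) (Fin 2) ℂ) ⊗ₖ T4 z - (Hmat n x + Fmat T z) := by
  have hFh : (Fmat T z)ᴴ = Fmat T z := by
    simp only [Fmat, conjTranspose_smul, conjTranspose_sum, kron_conjTranspose, sigmaH]
    simp [hsk, kron_neg, Finset.sum_neg_distrib, Complex.star_def, Complex.conj_I, neg_smul]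
  have hKh : ((1 : Matrix (Fin 2) (Fin 2) ℂ) ⊗ₖ T4 z)ᴴ
      = -((1 : Matrix (Fin 2) (Fin 2) ℂ) ⊗ₖ T4 z) := by
    rw [kron_conjTranspose, conjTranspose_one, h4, kron_neg]
  rw [conjTranspose_sub, conjTranspose_add, conjTranspose_add, conjTranspose_smul,
    conjTranspose_one, hKh, hFh, H_herm]
  simp [Complex.star_def, Complex.conj_I, sub_eq_add_neg]

/-- From the main identity: `Aᴴ Q⁻¹ + Q⁻¹ A − Q⁻¹ Q' Q⁻¹ = 1`. -/
lemma inv_identity {m : Type*} [Fintype m] [DecidableEq m] (A B Q Q' : Matrix m m ℂ)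
    (hQ : IsUnit Q) (h : A * Q + Q * B - Q' = Q * Q) :
    B * Q⁻¹ + Q⁻¹ * A - Q⁻¹ * Q' * Q⁻¹ = 1 := by
  have hdet : IsUnit Q.det := (Matrix.isUnit_iff_isUnit_det _).mp hQ
  have h1 : Q * Q⁻¹ = 1 := Matrix.mul_nonsing_inv _ hdet
  have h2 : Q⁻¹ * Q = 1 := Matrix.nonsing_inv_mul _ hdet
  have key : Q⁻¹ * (A * Q + Q * B - Q') * Q⁻¹ = Q⁻¹ * (Q * Q) * Q⁻¹ := by rw [h]
  calc B * Q⁻¹ + Q⁻¹ * A - Q⁻¹ * Q' * Q⁻¹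
      = Q⁻¹ * (A * Q + Q * B - Q') * Q⁻¹ := by
        rw [mul_sub, sub_mul, mul_add, add_mul]
        rw [show Q⁻¹ * (A * Q) * Q⁻¹ = Q⁻¹ * A * (Q * Q⁻¹) by simp only [mul_assoc],
          show Q⁻¹ * (Q * B) * Q⁻¹ = (Q⁻¹ * Q) * (B * Q⁻¹) by simp only [mul_assoc], h1, h2, mul_one, one_mul]
        abel
    _ = Q⁻¹ * (Q * Q) * Q⁻¹ := key
    _ = (Q⁻¹ * Q) * (Q * Q⁻¹) := by simp only [mul_assoc]
    _ = 1 := by rw [h1, h2, one_mul]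

end CoreId

section Calculus

variable {m : Type*} [Fintype m] [DecidableEq m] {z : ℝ}

lemma hasDerivAt_matrix {f : ℝ → Matrix m m ℂ} {f' : Matrix m m ℂ} :
    HasDerivAt f f' z ↔ ∀ i j, HasDerivAt (fun w => f w i j) (f' i j) z := by
  exact hasDerivAt_pi.trans (forall_congr' fun i => hasDerivAt_pi)

lemma HasDerivAt.matmul {f g : ℝ → Matrix m m ℂ} {f' g' : Matrix m m ℂ}
    (hf : HasDerivAt f f' z) (hg : HasDerivAt g g' z) :
    HasDerivAt (fun w => f w * g w) (f' * g z + f z * g') z := by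
  rw [hasDerivAt_matrix] at *
  intro i j
  simp only [Matrix.add_apply, Matrix.mul_apply]
  exact (HasDerivAt.fun_sum fun k _ => (hf i k).mul (hg k j)).congr_deriv
    (by rw [← Finset.sum_add_distrib])

lemma HasDerivAt.matmulVec {f : ℝ → Matrix m m ℂ} {v : ℝ → m → ℂ} {f' : Matrix m m ℂ}
    {v' : m → ℂ} (hf : HasDerivAt f f' z) (hv : HasDerivAt v v' z) :
    HasDerivAt (fun w => f w *ᵥ v w) (f' *ᵥ v z + f z *ᵥ v') z := by
  rw [hasDerivAt_pi] at hv ⊢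
  rw [hasDerivAt_matrix] at hf
  intro i
  simp only [Pi.add_apply, Matrix.mulVec, dotProduct]
  exact (HasDerivAt.fun_sum fun k _ => (hf i k).mul (hv k)).congr_deriv
    (by rw [← Finset.sum_add_distrib])

lemma HasDerivAt.dotP {u v : ℝ → m → ℂ} {u' v' : m → ℂ}
    (hu : HasDerivAt u u' z) (hv : HasDerivAt v v' z) :
    HasDerivAt (fun w => u w ⬝ᵥ v w) (u' ⬝ᵥ v z + u z ⬝ᵥ v') z := by
  rw [hasDerivAt_pi] at hu hv
  simp only [dotProduct]
  exact (HasDerivAt.fun_sum fun k _ => (hu k).mul (hv k)).congr_deriv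
    (by rw [← Finset.sum_add_distrib])

lemma diffAt_det {f : ℝ → Matrix m m ℂ} (hf : ∀ i j, DifferentiableAt ℝ (fun w => f w i j) z) :
    DifferentiableAt ℝ (fun w => (f w).det) z := by
  simp only [Matrix.det_apply']
  exact DifferentiableAt.fun_sum fun s _ =>
    (DifferentiableAt.fun_finsetProd fun i _ => hf (s i) i).const_mul _

lemma diffAt_adjugate {f : ℝ → Matrix m m ℂ}
    (hf : ∀ i j, DifferentiableAt ℝ (fun w => f w i j) z) (i j : m) :
    DifferentiableAt ℝ (fun w => (f w).adjugate i j) z := by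
  simp only [Matrix.adjugate_apply]
  refine diffAt_det fun a b => ?_
  simp only [Matrix.updateRow_apply]
  by_cases h : a = j <;> simp [h, hf]

lemma diffAt_inv {f : ℝ → Matrix m m ℂ}
    (hf : ∀ i j, DifferentiableAt ℝ (fun w => f w i j) z) (hdet : (f z).det ≠ 0) (i j : m) :
    DifferentiableAt ℝ (fun w => (f w)⁻¹ i j) z := by
  have : ∀ w, (f w)⁻¹ i j = ((f w).det)⁻¹ * (f w).adjugate i j := by
    intro w
    rw [Matrix.inv_def, Matrix.smul_apply, Ring.inverse_eq_inv', smul_eq_mul]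
  simp only [this]
  exact ((diffAt_det hf).inv hdet).mul (diffAt_adjugate hf i j)

lemma hasDerivAt_matrix_inv {f : ℝ → Matrix m m ℂ} {f' : Matrix m m ℂ}
    (hf : HasDerivAt f f' z) (hu : IsUnit (f z)) :
    HasDerivAt (fun w => (f w)⁻¹) (-((f z)⁻¹ * f' * (f z)⁻¹)) z := by
  have hdet : (f z).det ≠ 0 := IsUnit.ne_zero ((Matrix.isUnit_iff_isUnit_det _).mp hu)
  have hent : ∀ i j, DifferentiableAt ℝ (fun w => f w i j) z :=
    fun i j => ((hasDerivAt_matrix.mp hf) i j).differentiableAt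
  have hcont : ContinuousAt (fun w => (f w).det) z := (diffAt_det hent).continuousAt
  have hev : ∀ᶠ w in nhds z, (f w).det ≠ 0 := hcont.eventually_ne hdet
  have hev1 : (fun w => f w * (f w)⁻¹) =ᶠ[nhds z] (fun _ => 1) := by
    filter_upwards [hev] with w hw
    exact Matrix.mul_nonsing_inv _ (isUnit_iff_ne_zero.mpr hw)
  have hdiff : ∀ i j, DifferentiableAt ℝ (fun w => (f w)⁻¹ i j) z :=
    diffAt_inv hent hdet
  set G : Matrix m m ℂ := Matrix.of fun i j => deriv (fun w => (f w)⁻¹ i j) z with hG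
  have hGd : HasDerivAt (fun w => (f w)⁻¹) G z :=
    hasDerivAt_matrix.mpr fun i j => (hdiff i j).hasDerivAt
  have hprod : HasDerivAt (fun w => f w * (f w)⁻¹) (f' * (f z)⁻¹ + f z * G) z :=
    hf.matmul hGd
  have hone : HasDerivAt (fun w : ℝ => f w * (f w)⁻¹) 0 z :=
    (hasDerivAt_const z (1 : Matrix m m ℂ)).congr_of_eventuallyEq hev1
  have heq : f' * (f z)⁻¹ + f z * G = 0 := hprod.unique hone
  have h2 : (f z)⁻¹ * f z = 1 := Matrix.nonsing_inv_mul _ (isUnit_iff_ne_zero.mpr hdet)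
  have : G = -((f z)⁻¹ * f' * (f z)⁻¹) := by
    have h3 : f z * G = -(f' * (f z)⁻¹) := by linear_combination (norm := abel) heq
    calc G = ((f z)⁻¹ * f z) * G := by rw [h2, one_mul]
      _ = (f z)⁻¹ * (f z * G) := by rw [mul_assoc]
      _ = -((f z)⁻¹ * f' * (f z)⁻¹) := by rw [h3, mul_assoc]; simp [mul_neg]
  rwa [this] at hGd

end Calculus

section DerivOfQ

variable {n : ℕ} {z : ℝ}

lemma hasDerivAt_kron {B : Matrix (Fin 2) (Fin 2) ℂ} {g : ℝ → Mat n} {g' : Mat n}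
    (hg : HasDerivAt g g' z) :
    HasDerivAt (fun w => B ⊗ₖ g w) (B ⊗ₖ g') z := by
  rw [hasDerivAt_matrix] at hg ⊢
  rintro ⟨a, i⟩ ⟨b, k⟩
  simpa [kroneckerMap_apply] using (hg i k).const_mul (B a b)

lemma hasDerivAt_Fmat (T : Fin 3 → ℝ → Mat n) (T4 : ℝ → Mat n)
    (hT : ∀ j : Fin 3, HasDerivAt (T j) (nahmRHS T T4 j z) z) :
    HasDerivAt (fun w => Fmat T w) (Fder T T4 z) z := by
  have hsum : HasDerivAt (fun w => ∑ j : Fin 3, σ j ⊗ₖ T j w)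
      (∑ j : Fin 3, σ j ⊗ₖ nahmRHS T T4 j z) z :=
    HasDerivAt.fun_sum fun j _ => hasDerivAt_kron (hT j)
  have h4 := hsum.const_smul Complex.I
  simp [Fmat, Fder, Pi.smul_def] at h4 ⊢
  exact h4

lemma hasDerivAt_Qmat (x : Fin 3 → ℝ) (T : Fin 3 → ℝ → Mat n) (T4 : ℝ → Mat n)
    (hT : ∀ j : Fin 3, HasDerivAt (T j) (nahmRHS T T4 j z) z) :
    HasDerivAt (fun w => Qmat x T w) (Qder x T T4 z) z := by
  have hF := hasDerivAt_Fmat T T4 hT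
  have hH : HasDerivAt (fun _ : ℝ => Hmat n x) 0 z := hasDerivAt_const z _
  have h1 : HasDerivAt (fun w => Hmat n x * Fmat T w)
      (0 * Fmat T z + Hmat n x * Fder T T4 z) z := hH.matmul hF
  have h2 : HasDerivAt (fun w => Hmat n x * Fmat T w * Hmat n x)
      ((0 * Fmat T z + Hmat n x * Fder T T4 z) * Hmat n x + Hmat n x * Fmat T z * 0) z :=
    h1.matmul hH
  have h3 := (h2.const_smul (((r2 x : ℂ))⁻¹)).sub hF
  simp [Qmat, Qder, Pi.smul_def, Pi.sub_def, zero_mul, mul_zero, zero_add, add_zero] at h3 ⊢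
  exact h3

end DerivOfQ

set_option maxHeartbeats 1000000 in
/-- Panagopoulos antiderivative `∫ v_a† v_b dz = v_a† Q⁻¹ v_b`: with skew-adjoint
Nahm data, `r² ≠ 0`, `Q(z)` invertible, and `v_a, v_b` solutions of the Weyl equation
`dv/dz = [i x₄ + 1₂⊗T₄ − (H+F)]v`, one has `d/dz (v_a† Q⁻¹ v_b) = v_a† v_b` on `I`. -/
theorem panagopoulos_antiderivative_norm {n : ℕ} (I : Set ℝ) (T1 T2 T3 T4 : ℝ → Mat n)
    (hsk1 : ∀ z ∈ I, (T1 z)ᴴ = -T1 z) (hsk2 : ∀ z ∈ I, (T2 z)ᴴ = -T2 z)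
    (hsk3 : ∀ z ∈ I, (T3 z)ᴴ = -T3 z) (hsk4 : ∀ z ∈ I, (T4 z)ᴴ = -T4 z)
    (hnahm : ∀ z ∈ I, ∀ i : Fin 3,
      HasDerivAt (![T1, T2, T3] i) (nahmRHS ![T1, T2, T3] T4 i z) z)
    (x : Fin 3 → ℝ) (hx : r2 x ≠ 0) (x4 : ℝ)
    (hQ : ∀ z ∈ I, IsUnit (Qmat x ![T1, T2, T3] z))
    (va vb : ℝ → (Fin 2 × Fin n) → ℂ)
    (hva : ∀ z ∈ I, HasDerivAt va
      ((((Complex.I * (x4 : ℂ)) • (1 : Mat2 n)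
          + (1 : Matrix (Fin 2) (Fin 2) ℂ) ⊗ₖ T4 z
          - (Hmat n x + Fmat ![T1, T2, T3] z))) *ᵥ va z) z)
    (hvb : ∀ z ∈ I, HasDerivAt vb
      ((((Complex.I * (x4 : ℂ)) • (1 : Mat2 n)
          + (1 : Matrix (Fin 2) (Fin 2) ℂ) ⊗ₖ T4 z
          - (Hmat n x + Fmat ![T1, T2, T3] z))) *ᵥ vb z) z) :
    ∀ z ∈ I, HasDerivAt
      (fun w => star (va w) ⬝ᵥ ((Qmat x ![T1, T2, T3] w)⁻¹ *ᵥ vb w))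
      (star (va z) ⬝ᵥ vb z) z := by
  intro z hz
  set T : Fin 3 → ℝ → Mat n := ![T1, T2, T3] with hT
  have hx' : (r2 x : ℂ) ≠ 0 := Complex.ofReal_ne_zero.mpr hx
  set A : Mat2 n := (Complex.I * (x4 : ℂ)) • (1 : Mat2 n)
      + (1 : Matrix (Fin 2) (Fin 2) ℂ) ⊗ₖ T4 z - (Hmat n x + Fmat T z) with hA
  have hQz : IsUnit (Qmat x T z) := hQ z hz
  have hQd : HasDerivAt (fun w => Qmat x T w) (Qder x T T4 z) z :=
    hasDerivAt_Qmat x T T4 (fun j => hnahm z hz j)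
  have hQinv : HasDerivAt (fun w => (Qmat x T w)⁻¹)
      (-((Qmat x T z)⁻¹ * Qder x T T4 z * (Qmat x T z)⁻¹)) z :=
    hasDerivAt_matrix_inv hQd hQz
  have h2 : HasDerivAt (fun w => (Qmat x T w)⁻¹ *ᵥ vb w)
      (-((Qmat x T z)⁻¹ * Qder x T T4 z * (Qmat x T z)⁻¹) *ᵥ vb z
        + (Qmat x T z)⁻¹ *ᵥ (A *ᵥ vb z)) z := hQinv.matmulVec (hvb z hz)
  have h3 : HasDerivAt (fun w => star (va w)) (star (A *ᵥ va z)) z := (hva z hz).star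
  have htot := h3.dotP h2
  have hskj : ∀ j : Fin 3, (T j z)ᴴ = -(T j z) := by
    intro j
    fin_cases j
    · exact hsk1 z hz
    · exact hsk2 z hz
    · exact hsk3 z hz
  have hAh : Aᴴ = (-(Complex.I * (x4 : ℂ))) • (1 : Mat2 n)
      - (1 : Matrix (Fin 2) (Fin 2) ℂ) ⊗ₖ T4 z - (Hmat n x + Fmat T z) := by
    rw [hA]; exact weyl_herm x x4 T T4 z hskj (hsk4 z hz)
  have hmain := main_identity x hx' x4 T T4 z
  have hinv := inv_identity A _ (Qmat x T z) (Qder x T T4 z) hQz hmain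
  have hN : Aᴴ * (Qmat x T z)⁻¹
      + (-((Qmat x T z)⁻¹ * Qder x T T4 z * (Qmat x T z)⁻¹) + (Qmat x T z)⁻¹ * A) = 1 := by
    calc Aᴴ * (Qmat x T z)⁻¹
        + (-((Qmat x T z)⁻¹ * Qder x T T4 z * (Qmat x T z)⁻¹) + (Qmat x T z)⁻¹ * A)
        = ((-(Complex.I * (x4 : ℂ))) • (1 : Mat2 n)
            - (1 : Matrix (Fin 2) (Fin 2) ℂ) ⊗ₖ T4 z - (Hmat n x + Fmat T z)) * (Qmat x T z)⁻¹
          + (Qmat x T z)⁻¹ * A - (Qmat x T z)⁻¹ * Qder x T T4 z * (Qmat x T z)⁻¹ := by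
          rw [hAh]; abel
      _ = 1 := hinv
  have hval : star (A *ᵥ va z) ⬝ᵥ ((Qmat x T z)⁻¹ *ᵥ vb z)
      + star (va z) ⬝ᵥ (-((Qmat x T z)⁻¹ * Qder x T T4 z * (Qmat x T z)⁻¹) *ᵥ vb z
        + (Qmat x T z)⁻¹ *ᵥ (A *ᵥ vb z))
      = star (va z) ⬝ᵥ vb z := by
    rw [Matrix.star_mulVec, ← Matrix.dotProduct_mulVec, ← dotProduct_add,
      Matrix.mulVec_mulVec, Matrix.mulVec_mulVec,
      ← Matrix.add_mulVec, ← Matrix.add_mulVec, hN, Matrix.one_mulVec]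
  exact htot.congr_deriv hval
end
end

section
/- (Nahm's ansatz.) Let T₁, T₂, T₃, T₄ : I → Mₙ(ℂ) be differentiable, x = (x₁,x₂,x₃) ∈ ℝ³, x₄ ∈ ℝ, ζ ∈ ℂ. Set û(ζ) = (i(ζ−ζ̄), ζ+ζ̄, 1−|ζ|²)/(1+|ζ|²) ∈ ℝ³, η = (x₂−ix₁) − 2x₃ζ − (x₂+ix₁)ζ², L(ζ) = (T₁+iT₂) − 2iT₃ζ + (T₁−iT₂)ζ² and M(ζ) = −T₄ − iT₃ + (T₁−iT₂)ζ. Let s ∈ ℂ² with (1₂ + û·σ)s ≠ 0, let U : I → ℂⁿ be differentiable, and define w(z) = exp(−iz[(x₁−ix₂)ζ − ix₃ − x₄]) · [(1₂+û·σ)s] ⊗ U(z) ∈ ℂ^{2n}. Then Δw = 0 on I if and only if (L(ζ) − η·1ₙ)U(z) = 0 and dU/dz + M(ζ)U(z) = 0 for all z ∈ I. -/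
open Matrix Kronecker

noncomputable section

attribute [local instance] Matrix.normedAddCommGroup Matrix.normedSpace

/-- mulVec of a Kronecker product on a decomposable vector. -/
lemma kron_mulVec {n : ℕ} (B : Matrix (Fin 2) (Fin 2) ℂ) (C : Matrix (Fin n) (Fin n) ℂ)
    (a : Fin 2 → ℂ) (v : Fin n → ℂ) (e : ℂ) (p : Fin 2 × Fin n) :
    ((B ⊗ₖ C) *ᵥ (fun q => e * (a q.1 * v q.2))) p = e * ((B *ᵥ a) p.1 * ((C *ᵥ v) p.2)) := by
  rw [show (B *ᵥ a) p.1 = ∑ j, B p.1 j * a j from rfl,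
    show (C *ᵥ v) p.2 = ∑ i, C p.2 i * v i from rfl, Finset.sum_mul_sum]
  simp only [Matrix.mulVec, dotProduct, Fintype.sum_prod_type, Matrix.kroneckerMap_apply,
    Finset.mul_sum]
  exact Finset.sum_congr rfl fun j _ => Finset.sum_congr rfl fun l _ => by ring

lemma expand0 {n : ℕ} (T1 T2 T3 T4 : Matrix (Fin n) (Fin n) ℂ) (x0 x1 x2 x4 : ℝ) (ζ c e : ℂ)
    (A : Fin 2 → ℂ) (hA1 : A 1 = Complex.I * ζ * A 0) (u u' : Fin n → ℂ) (k : Fin n)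
    (hc : c = ((x0:ℂ) - Complex.I*x1)*ζ - Complex.I*x2 - x4) :
    (Complex.I • (fun p : Fin 2 × Fin n => (-Complex.I*c)*e*(A p.1 * u p.2) + e*(A p.1*u' p.2))
      + (x4:ℂ) • (fun p : Fin 2 × Fin n => e*(A p.1*u p.2))
      - Complex.I • (((1: Matrix (Fin 2) (Fin 2) ℂ) ⊗ₖ T4) *ᵥ fun p => e*(A p.1*u p.2))
      + (σ 0 ⊗ₖ (T1 + (Complex.I*(x0:ℂ))•1) + σ 1 ⊗ₖ (T2 + (Complex.I*(x1:ℂ))•1)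
          + σ 2 ⊗ₖ (T3 + (Complex.I*(x2:ℂ))•1)) *ᵥ (fun p => e*(A p.1*u p.2))) ((0 : Fin 2), k)
    = Complex.I * e * A 0 *
        ((u' + (-T4 - Complex.I•T3 + ζ•(T1 - Complex.I•T2)) *ᵥ u) k) := by
  simp only [Pi.add_apply, Pi.sub_apply, Pi.smul_apply, smul_eq_mul, Matrix.add_mulVec,
    kron_mulVec, Matrix.sub_mulVec, Matrix.neg_mulVec, Matrix.smul_mulVec,
    Matrix.one_mulVec, Pi.neg_apply]
  simp only [Matrix.mulVec, dotProduct, Fin.sum_univ_two, σ, Matrix.cons_val_zero,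
    Matrix.cons_val_one, Matrix.head_cons, Matrix.cons_val', Matrix.of_apply, Matrix.empty_val',
    Matrix.one_apply, Pi.add_apply, Pi.sub_apply, Pi.neg_apply, Pi.smul_apply, smul_eq_mul, hA1, hc,
    Matrix.cons_val_two, Matrix.tail_cons]
  have h3 : Complex.I ^ 3 = -Complex.I := by
    rw [pow_succ, Complex.I_sq]; ring
  have h4 : Complex.I ^ 4 = 1 := by
    rw [show (4:ℕ) = 2+2 from rfl, pow_add, Complex.I_sq]; ring
  ring_nf
  simp only [Complex.I_sq, h3, h4]
  ring

lemma expand1 {n : ℕ} (T1 T2 T3 T4 : Matrix (Fin n) (Fin n) ℂ) (x0 x1 x2 x4 : ℝ) (ζ c e : ℂ)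
    (A : Fin 2 → ℂ) (hA1 : A 1 = Complex.I * ζ * A 0) (u u' : Fin n → ℂ) (k : Fin n)
    (hc : c = ((x0:ℂ) - Complex.I*x1)*ζ - Complex.I*x2 - x4) :
    (Complex.I • (fun p : Fin 2 × Fin n => (-Complex.I*c)*e*(A p.1 * u p.2) + e*(A p.1*u' p.2))
      + (x4:ℂ) • (fun p : Fin 2 × Fin n => e*(A p.1*u p.2))
      - Complex.I • (((1: Matrix (Fin 2) (Fin 2) ℂ) ⊗ₖ T4) *ᵥ fun p => e*(A p.1*u p.2))
      + (σ 0 ⊗ₖ (T1 + (Complex.I*(x0:ℂ))•1) + σ 1 ⊗ₖ (T2 + (Complex.I*(x1:ℂ))•1)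
          + σ 2 ⊗ₖ (T3 + (Complex.I*(x2:ℂ))•1)) *ᵥ (fun p => e*(A p.1*u p.2))) ((1 : Fin 2), k)
    = e * A 0 *
        ((((T1 + Complex.I•T2) - (2*Complex.I*ζ)•T3 + (ζ^2)•(T1 - Complex.I•T2)
            - (((x1:ℂ) - Complex.I*x0) - 2*(x2:ℂ)*ζ - ((x1:ℂ) + Complex.I*x0)*ζ^2) • 1) *ᵥ u) k
          - ζ * ((u' + (-T4 - Complex.I•T3 + ζ•(T1 - Complex.I•T2)) *ᵥ u) k)) := by
  simp only [Pi.add_apply, Pi.sub_apply, Pi.smul_apply, smul_eq_mul, Matrix.add_mulVec,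
    kron_mulVec, Matrix.sub_mulVec, Matrix.neg_mulVec, Matrix.smul_mulVec,
    Matrix.one_mulVec, Pi.neg_apply]
  simp only [Matrix.mulVec, dotProduct, Fin.sum_univ_two, σ, Matrix.cons_val_zero,
    Matrix.cons_val_one, Matrix.head_cons, Matrix.cons_val', Matrix.of_apply, Matrix.empty_val',
    Matrix.one_apply, Pi.add_apply, Pi.sub_apply, Pi.neg_apply, Pi.smul_apply, smul_eq_mul, hA1, hc,
    Matrix.cons_val_two, Matrix.tail_cons]
  have h3 : Complex.I ^ 3 = -Complex.I := by
    rw [pow_succ, Complex.I_sq]; ring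
  have h4 : Complex.I ^ 4 = 1 := by
    rw [show (4:ℕ) = 2+2 from rfl, pow_add, Complex.I_sq]; ring
  ring_nf
  simp only [Complex.I_sq, h3, h4]
  ring

/-- Nahm's ansatz: with `û(ζ) = (i(ζ−ζ̄), ζ+ζ̄, 1−|ζ|²)/(1+|ζ|²)`,
`η = (x₂−ix₁) − 2x₃ζ − (x₂+ix₁)ζ²`, `L(ζ) = (T₁+iT₂) − 2iT₃ζ + (T₁−iT₂)ζ²`,
`M(ζ) = −T₄ − iT₃ + (T₁−iT₂)ζ`, `s` a spinor with `(1₂+û·σ)s ≠ 0` and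
`w(z) = e^{−iz[(x₁−ix₂)ζ−ix₃−x₄]}·[(1₂+û·σ)s]⊗U(z)`, we have `Δw = 0` on `I` iff
`(L(ζ)−η·1ₙ)U = 0` and `dU/dz + M(ζ)U = 0` on `I`. -/
theorem nahm_ansatz {n : ℕ} (I : Set ℝ) (T1 T2 T3 T4 : ℝ → Mat n)
    (hd1 : ∀ z ∈ I, DifferentiableAt ℝ T1 z) (hd2 : ∀ z ∈ I, DifferentiableAt ℝ T2 z)
    (hd3 : ∀ z ∈ I, DifferentiableAt ℝ T3 z) (hd4 : ∀ z ∈ I, DifferentiableAt ℝ T4 z)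
    (x : Fin 3 → ℝ) (x4 : ℝ) (ζ : ℂ) (s : Fin 2 → ℂ)
    (U U' : ℝ → Fin n → ℂ) (hU : ∀ z ∈ I, HasDerivAt U (U' z) z) :
    let uσ : Matrix (Fin 2) (Fin 2) ℂ :=
      (1 : Matrix (Fin 2) (Fin 2) ℂ) +
        (1 + ζ * (starRingEnd ℂ) ζ)⁻¹ •
          ((Complex.I * (ζ - (starRingEnd ℂ) ζ)) • σ 0
            + (ζ + (starRingEnd ℂ) ζ) • σ 1
            + (1 - ζ * (starRingEnd ℂ) ζ) • σ 2)
    let η : ℂ :=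
      ((x 1 : ℂ) - Complex.I * x 0) - 2 * (x 2 : ℂ) * ζ - ((x 1 : ℂ) + Complex.I * x 0) * ζ ^ 2
    let L : ℝ → Mat n := fun z =>
      (T1 z + Complex.I • T2 z) - (2 * Complex.I * ζ) • T3 z + ζ ^ 2 • (T1 z - Complex.I • T2 z)
    let M : ℝ → Mat n := fun z =>
      -T4 z - Complex.I • T3 z + ζ • (T1 z - Complex.I • T2 z)
    let w : ℝ → (Fin 2 × Fin n) → ℂ := fun z p =>
      Complex.exp (-Complex.I * z * (((x 0 : ℂ) - Complex.I * x 1) * ζ - Complex.I * x 2 - x4))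
        * ((uσ *ᵥ s) p.1 * U z p.2)
    uσ *ᵥ s ≠ 0 →
    ((∀ z ∈ I, ∃ w' : (Fin 2 × Fin n) → ℂ, HasDerivAt w w' z ∧
        Complex.I • w' + (x4 : ℂ) • w z
          - Complex.I • (((1 : Matrix (Fin 2) (Fin 2) ℂ) ⊗ₖ T4 z) *ᵥ w z)
          + (∑ j : Fin 3,
              σ j ⊗ₖ (![T1, T2, T3] j z + (Complex.I * (x j : ℂ)) • (1 : Mat n))) *ᵥ w z
        = 0) ↔
      (∀ z ∈ I, (L z - η • (1 : Mat n)) *ᵥ U z = 0 ∧ U' z + M z *ᵥ U z = 0)) := by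
  intro uσ η L M w hs
  have hD : (1 + ζ * (starRingEnd ℂ) ζ) ≠ 0 := by
    rw [Complex.mul_conj]
    intro h
    have := congrArg Complex.re h
    simp [Complex.add_re] at this
    nlinarith [Complex.normSq_nonneg ζ, this]
  set A : Fin 2 → ℂ := uσ *ᵥ s with hAdef
  have hA1 : A 1 = Complex.I * ζ * A 0 := by
    simp only [hAdef, uσ, Matrix.mulVec, dotProduct, Fin.sum_univ_two, Matrix.add_apply,
      Matrix.smul_apply, Matrix.one_apply, σ, Matrix.cons_val_zero, Matrix.cons_val_one,
      Matrix.head_cons, Matrix.cons_val', Matrix.of_apply, Matrix.empty_val',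
      Matrix.cons_val_two, Matrix.tail_cons, Fin.isValue, one_ne_zero, zero_ne_one, if_true, if_false]
    field_simp
    have hDi : (1 + ζ * (starRingEnd ℂ) ζ)⁻¹ * (1 + ζ * (starRingEnd ℂ) ζ) = 1 := inv_mul_cancel₀ hD
    linear_combination (2 * ζ * (starRingEnd ℂ) ζ * s 1 * (1 + ζ * (starRingEnd ℂ) ζ)⁻¹) * Complex.I_sq
      + (Complex.I * ζ * s 0 - s 1) * hDi
  have hA0 : A 0 ≠ 0 := by
    intro h
    apply hs
    funext i
    fin_cases i <;> simp [h, hA1]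
  set c : ℂ := ((x 0 : ℂ) - Complex.I * x 1) * ζ - Complex.I * x 2 - x4 with hc
  have hwdef : w = fun (z : ℝ) (p : Fin 2 × Fin n) => Complex.exp (-Complex.I * (z : ℂ) * c) * (A p.1 * U z p.2) := rfl
  have hderiv : ∀ z ∈ I, HasDerivAt w
      (fun p : Fin 2 × Fin n => (-Complex.I*c) * Complex.exp (-Complex.I*z*c) * (A p.1 * U z p.2)
        + Complex.exp (-Complex.I*z*c) * (A p.1 * U' z p.2)) z := by
    intro z hz
    rw [hwdef]
    refine hasDerivAt_pi.2 fun p => ?_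
    have hU' : HasDerivAt (fun t => U t p.2) (U' z p.2) z := hasDerivAt_pi.1 (hU z hz) p.2
    have h0 : HasDerivAt (fun t : ℝ => (t : ℂ)) 1 z := by
      simpa using (hasDerivAt_id z).ofReal_comp
    have hexp : HasDerivAt (fun t : ℝ => Complex.exp (-Complex.I * t * c))
        (Complex.exp (-Complex.I * z * c) * (-Complex.I * 1 * c)) z :=
      ((h0.const_mul (-Complex.I)).mul_const c).cexp
    have := hexp.mul (hU'.const_mul (A p.1))
    refine this.congr_deriv ?_
    ring
  have keyiff : ∀ z : ℝ,
      ((Complex.I • (fun p : Fin 2 × Fin n =>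
            (-Complex.I*c)*Complex.exp (-Complex.I*z*c)*(A p.1 * U z p.2)
              + Complex.exp (-Complex.I*z*c)*(A p.1*U' z p.2))
        + (x4:ℂ) • (fun p : Fin 2 × Fin n => Complex.exp (-Complex.I*z*c)*(A p.1*U z p.2))
        - Complex.I • (((1: Matrix (Fin 2) (Fin 2) ℂ) ⊗ₖ T4 z) *ᵥ
            fun p => Complex.exp (-Complex.I*z*c)*(A p.1*U z p.2))
        + (σ 0 ⊗ₖ (T1 z + (Complex.I*(x 0:ℂ))•1) + σ 1 ⊗ₖ (T2 z + (Complex.I*(x 1:ℂ))•1)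
            + σ 2 ⊗ₖ (T3 z + (Complex.I*(x 2:ℂ))•1)) *ᵥ
              (fun p => Complex.exp (-Complex.I*z*c)*(A p.1*U z p.2))) = 0)
      ↔ ((L z - η • (1 : Mat n)) *ᵥ U z = 0 ∧ U' z + M z *ᵥ U z = 0) := by
    intro z
    rw [funext_iff]
    have hL : L z - η • (1 : Mat n) =
        (T1 z + Complex.I•T2 z) - (2*Complex.I*ζ)•T3 z + (ζ^2)•(T1 z - Complex.I•T2 z)
          - (((x 1:ℂ) - Complex.I*(x 0)) - 2*(x 2:ℂ)*ζ - ((x 1:ℂ) + Complex.I*(x 0))*ζ^2) • 1 := rfl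
    have hM : M z = -T4 z - Complex.I•T3 z + ζ•(T1 z - Complex.I•T2 z) := rfl
    constructor
    · intro hE
      have h2 : U' z + M z *ᵥ U z = 0 := by
        funext k
        have h := hE ((0 : Fin 2), k)
        rw [expand0 (T1 z) (T2 z) (T3 z) (T4 z) (x 0) (x 1) (x 2) x4 ζ c
          (Complex.exp (-Complex.I*z*c)) A hA1 (U z) (U' z) k hc] at h
        rw [hM]
        simpa [Complex.exp_ne_zero, Complex.I_ne_zero, hA0] using h
      refine ⟨?_, h2⟩
      funext k
      have h2k : (U' z + M z *ᵥ U z) k = 0 := by rw [h2]; rfl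
      have h := hE ((1 : Fin 2), k)
      rw [expand1 (T1 z) (T2 z) (T3 z) (T4 z) (x 0) (x 1) (x 2) x4 ζ c
        (Complex.exp (-Complex.I*z*c)) A hA1 (U z) (U' z) k hc] at h
      rw [hM] at h2k
      rw [hL]
      simp only [h2k, mul_zero, sub_zero] at h
      simpa [Complex.exp_ne_zero, hA0] using h
    · rintro ⟨h1, h2⟩ ⟨i, k⟩
      have h2k : (U' z + M z *ᵥ U z) k = 0 := by rw [h2]; rfl
      rw [hM] at h2k
      have h1k : ((L z - η • (1 : Mat n)) *ᵥ U z) k = 0 := by rw [h1]; rfl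
      rw [hL] at h1k
      fin_cases i <;> simp only [Fin.mk_zero, Fin.mk_one]
      · rw [expand0 (T1 z) (T2 z) (T3 z) (T4 z) (x 0) (x 1) (x 2) x4 ζ c
          (Complex.exp (-Complex.I*z*c)) A hA1 (U z) (U' z) k hc, h2k]
        simp
      · rw [expand1 (T1 z) (T2 z) (T3 z) (T4 z) (x 0) (x 1) (x 2) x4 ζ c
          (Complex.exp (-Complex.I*z*c)) A hA1 (U z) (U' z) k hc, h1k, h2k]
        simp
  constructor
  · intro h z hz
    obtain ⟨w0, hw0, heq⟩ := h z hz
    have hu : w0 = fun p : Fin 2 × Fin n =>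
        (-Complex.I*c) * Complex.exp (-Complex.I*z*c) * (A p.1 * U z p.2)
          + Complex.exp (-Complex.I*z*c) * (A p.1 * U' z p.2) := hw0.unique (hderiv z hz)
    rw [hu] at heq
    rw [hwdef, Fin.sum_univ_three] at heq
    simp only [Matrix.cons_val_zero, Matrix.cons_val_one, Matrix.head_cons, Matrix.cons_val_two,
      Matrix.tail_cons] at heq
    exact (keyiff z).1 heq
  · intro h z hz
    refine ⟨_, hderiv z hz, ?_⟩
    rw [hwdef, Fin.sum_univ_three]
    simp only [Matrix.cons_val_zero, Matrix.cons_val_one, Matrix.head_cons, Matrix.cons_val_two,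
      Matrix.tail_cons]
    exact (keyiff z).2 (h z hz)
end
end

section
/- Let L, M : I → Mₙ(ℂ) with L differentiable and satisfying the Lax equation dL/dz = L M − M L on a real interval I. Then for every η ∈ ℂ the function z ↦ det(L(z) − η·1ₙ) is constant on I. -/
open Matrix

noncomputable section

attribute [local instance] Matrix.normedAddCommGroup Matrix.normedSpace

/-- The determinant as a continuous multilinear map in the rows. -/
def detCML (n : ℕ) : ContinuousMultilinearMap ℂ (fun _ : Fin n => (Fin n → ℂ)) ℂ :=
  MultilinearMap.mkContinuous (Matrix.detRowAlternating).toMultilinearMap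
    (Nat.factorial n) fun m => by
    have : (Matrix.detRowAlternating (R := ℂ) (n := Fin n)).toMultilinearMap m
        = Matrix.det (Matrix.of m) := rfl
    rw [this, Matrix.det_apply]
    calc ‖∑ σ : Equiv.Perm (Fin n), Equiv.Perm.sign σ • ∏ i, Matrix.of m (σ i) i‖
        ≤ ∑ σ : Equiv.Perm (Fin n), ‖Equiv.Perm.sign σ • ∏ i, Matrix.of m (σ i) i‖ :=
          norm_sum_le _ _
      _ ≤ ∑ _σ : Equiv.Perm (Fin n), ∏ i, ‖m i‖ := by
          refine Finset.sum_le_sum fun σ _ => ?_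
          rw [Units.smul_def, zsmul_eq_mul, norm_mul, norm_prod]
          have h1 : ‖((Equiv.Perm.sign σ : ℤ) : ℂ)‖ = 1 := by
            rcases Int.units_eq_one_or (Equiv.Perm.sign σ) with h | h <;> simp [h]
          rw [h1, one_mul]
          calc ∏ i, ‖Matrix.of m (σ i) i‖ ≤ ∏ i, ‖m (σ i)‖ :=
                Finset.prod_le_prod (fun _ _ => norm_nonneg _)
                  (fun i _ => norm_le_pi_norm (m (σ i)) i)
            _ = ∏ i, ‖m i‖ := Equiv.prod_comp σ (fun j => ‖m j‖)
      _ = (Nat.factorial n : ℝ) * ∏ i, ‖m i‖ := by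
          rw [Finset.sum_const, Finset.card_univ, Fintype.card_perm, Fintype.card_fin,
            nsmul_eq_mul]

theorem detCML_apply {n : ℕ} (A : Mat n) : detCML n (fun i => A i) = A.det := rfl

/-- Linearity of det in one row, in terms of the adjugate. -/
theorem det_updateRow_eq {n : ℕ} (A : Mat n) (i : Fin n) (v : Fin n → ℂ) :
    (A.updateRow i v).det = ∑ j, v j * A.adjugate j i := by
  rw [← Matrix.cramer_transpose_apply]
  have hv : v = ∑ j, v j • (Pi.single j 1 : Fin n → ℂ) := by
    ext k; simp [Pi.single_apply, eq_comm]
  conv_lhs => rw [hv]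
  rw [map_sum]
  simp only [LinearMap.map_smul]
  rw [Finset.sum_apply]
  refine Finset.sum_congr rfl fun j _ => ?_
  rw [Pi.smul_apply, smul_eq_mul]
  congr 1

theorem trace_adjugate_comm {n : ℕ} (A B : Mat n) :
    ∑ i, ∑ j, (A * B - B * A) i j * A.adjugate j i = 0 := by
  have h : ∀ C D : Mat n, ∑ i, ∑ j, (C * D) i j * A.adjugate j i
      = Matrix.trace (C * D * A.adjugate) := by
    intro C D
    simp [Matrix.trace, Matrix.mul_apply, Matrix.diag]
  simp only [Matrix.sub_apply, sub_mul, Finset.sum_sub_distrib]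
  rw [h A B, h B A]
  have e1 : (A * B * A.adjugate).trace = A.det * B.trace := by
    rw [Matrix.trace_mul_cycle, Matrix.adjugate_mul]
    simp [Matrix.smul_mul, Matrix.trace_smul, smul_eq_mul]
  have e2 : (B * A * A.adjugate).trace = A.det * B.trace := by
    rw [Matrix.mul_assoc, Matrix.mul_adjugate]
    simp [Matrix.mul_smul, Matrix.trace_smul, smul_eq_mul]
  rw [e1, e2, sub_self]

/-- if `L` satisfies the Lax equation `dL/dz = LM − ML` on a real interval `I`,
then for every `η ∈ ℂ` the function `z ↦ det(L(z) − η·1ₙ)` is constant on `I`. -/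
theorem lax_preserves_char_poly {n : ℕ} (I : Set ℝ) (hI : I.OrdConnected)
    (L M : ℝ → Mat n)
    (hLax : ∀ z ∈ I, HasDerivAt L (L z * M z - M z * L z) z) :
    ∀ η : ℂ, ∀ z ∈ I, ∀ w ∈ I,
      det (L z - η • (1 : Mat n)) = det (L w - η • (1 : Mat n)) := by
  intro η z hz w hw
  set A : ℝ → Mat n := fun z => L z - η • (1 : Mat n) with hA
  set B : ℝ → Mat n := fun z => L z * M z - M z * L z with hB
  -- derivative of A
  have hA' : ∀ z ∈ I, HasDerivAt A (B z) z := by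
    intro z hz
    exact (hLax z hz).sub_const (η • (1 : Mat n))
  -- derivative of the determinant is zero
  have hdet : ∀ z ∈ I, HasDerivAt (fun z => (A z).det) 0 z := by
    intro z hz
    have h1 : HasFDerivAt (fun m : Fin n → (Fin n → ℂ) => detCML n m)
        ((detCML n).linearDeriv (fun i => A z i)) (fun i => A z i) :=
      ContinuousMultilinearMap.hasFDerivAt _ _
    have h2 := (h1.restrictScalars ℝ).comp_hasDerivAt z (hA' z hz)
    have hval : (ContinuousLinearMap.restrictScalars ℝ
        ((detCML n).linearDeriv fun i => A z i)) (B z) = 0 := by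
      rw [ContinuousLinearMap.coe_restrictScalars']
      erw [ContinuousMultilinearMap.linearDeriv_apply]
      have h4 : ∀ i : Fin n, (detCML n) (Function.update (fun j => A z j) i (B z i))
          = ((A z).updateRow i (B z i)).det := fun i => rfl
      simp only [h4, det_updateRow_eq]
      have h5 : B z = A z * M z - M z * A z := by
        simp [hA, hB, Matrix.smul_mul, Matrix.mul_smul, sub_mul, mul_sub]
      rw [h5]
      exact trace_adjugate_comm (A z) (M z)
    exact h2.congr_deriv hval
  -- conclude constancy via the mean value inequality
  have key := Convex.norm_image_sub_le_of_norm_hasDerivWithin_le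
    (f := fun z => (A z).det) (f' := fun _ => 0) (C := 0)
    (fun x hx => (hdet x hx).hasDerivWithinAt) (fun x _ => by simp) hI.convex hw hz
  rw [zero_mul] at key
  have := norm_le_zero_iff.mp key
  have heq : (A z).det = (A w).det := sub_eq_zero.mp this
  exact heq
end
end

section
/- Let L, M : I → Mₙ(ℂ) with L differentiable and satisfying the Lax equation dL/dz = L M − M L on a real interval I, let η ∈ ℂ, and suppose L(z) − η·1ₙ is invertible for every z ∈ I. Then the adjugate matrix satisfies d/dz adj(L(z) − η·1ₙ) = [adj(L(z) − η·1ₙ), M(z)] on I. -/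
open Matrix

noncomputable section

attribute [local instance] Matrix.normedAddCommGroup Matrix.normedSpace

/-- Extract entrywise derivatives from a matrix-valued derivative. -/
lemma entry_hasDerivAt {n : ℕ} {F : ℝ → Mat n} {F' : Mat n} {z : ℝ}
    (h : HasDerivAt F F' z) (i j : Fin n) :
    HasDerivAt (fun w => F w i j) (F' i j) z := by
  let e : Mat n →ₗ[ℝ] ℂ :=
    { toFun := fun X => X i j
      map_add' := fun _ _ => rfl
      map_smul' := fun _ _ => rfl }
  exact e.toContinuousLinearMap.hasFDerivAt.comp_hasDerivAt z h

/-- Assemble a matrix-valued derivative from entrywise derivatives. -/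
lemma hasDerivAt_of_entries {n : ℕ} {F : ℝ → Mat n} {F' : Mat n} {z : ℝ}
    (h : ∀ i j, HasDerivAt (fun w => F w i j) (F' i j) z) :
    HasDerivAt F F' z := by
  have key : HasDerivAt
      (fun w => ∑ i, ∑ j, F w i j • Matrix.single i j (1 : ℂ))
      (∑ i, ∑ j, F' i j • Matrix.single i j (1 : ℂ)) z :=
    HasDerivAt.fun_sum fun i _ => HasDerivAt.fun_sum fun j _ => (h i j).smul_const _
  have hrep : ∀ X : Mat n, ∑ i, ∑ j, X i j • Matrix.single i j (1 : ℂ) = X := by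
    intro X
    conv_rhs => rw [Matrix.matrix_eq_sum_single X]
    refine Finset.sum_congr rfl fun i _ => Finset.sum_congr rfl fun j _ => ?_
    rw [Matrix.smul_single, smul_eq_mul, mul_one]
  have hfun : (fun w => ∑ i, ∑ j, F w i j • Matrix.single i j (1 : ℂ)) = F :=
    funext fun w => hrep (F w)
  rw [hfun, hrep F'] at key
  exact key

/-- Expansion of `trace (adjugate A * B)` as a sum over permutations. -/
lemma trace_adjugate_mul {n : ℕ} (A B : Mat n) :
    (Matrix.adjugate A * B).trace
      = ∑ σ : Equiv.Perm (Fin n), ((Equiv.Perm.sign σ : ℤ) : ℂ) *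
          ∑ i, (∏ j ∈ Finset.univ.erase i, A (σ j) j) * B (σ i) i := by
  have h1 : (Matrix.adjugate A * B).trace = ∑ i, Matrix.cramer A (fun k => B k i) i := by
    simp [Matrix.trace, Matrix.diag, Matrix.mul_apply, Matrix.cramer_eq_adjugate_mulVec,
      Matrix.mulVec, dotProduct]
  rw [h1]
  have h2 : ∀ i, Matrix.cramer A (fun k => B k i) i
      = ∑ σ : Equiv.Perm (Fin n), ((Equiv.Perm.sign σ : ℤ) : ℂ) *
          (B (σ i) i * ∏ j ∈ Finset.univ.erase i, A (σ j) j) := by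
    intro i
    rw [Matrix.cramer_apply, Matrix.det_apply']
    refine Finset.sum_congr rfl fun σ _ => ?_
    congr 1
    rw [← Finset.mul_prod_erase Finset.univ _ (Finset.mem_univ i)]
    congr 1
    · simp [Matrix.updateCol_apply]
    · refine Finset.prod_congr rfl fun j hj => ?_
      rw [Matrix.updateCol_apply, if_neg (Finset.ne_of_mem_erase hj)]
  simp_rw [h2]
  rw [Finset.sum_comm]
  refine Finset.sum_congr rfl fun σ _ => ?_
  rw [Finset.mul_sum]
  refine Finset.sum_congr rfl fun i _ => ?_
  ring

/-- Jacobi's formula, from entrywise derivatives. -/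
lemma jacobi_det {n : ℕ} {a : ℝ → Mat n} {a' : Mat n} {z : ℝ}
    (h : ∀ i j, HasDerivAt (fun w => a w i j) (a' i j) z) :
    HasDerivAt (fun w => (a w).det) ((Matrix.adjugate (a z) * a').trace) z := by
  have key : HasDerivAt
      (fun w => ∑ σ : Equiv.Perm (Fin n), ((Equiv.Perm.sign σ : ℤ) : ℂ) * ∏ i, a w (σ i) i)
      (∑ σ : Equiv.Perm (Fin n), ((Equiv.Perm.sign σ : ℤ) : ℂ) *
        ∑ i, (∏ j ∈ Finset.univ.erase i, a z (σ j) j) • a' (σ i) i) z :=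
    HasDerivAt.fun_sum fun σ _ => ((HasDerivAt.fun_finsetProd fun i _ => h (σ i) i).const_mul _)
  have hfun : (fun w => ∑ σ : Equiv.Perm (Fin n), ((Equiv.Perm.sign σ : ℤ) : ℂ) *
      ∏ i, a w (σ i) i) = fun w => (a w).det :=
    funext fun w => (Matrix.det_apply' (a w)).symm
  rw [hfun] at key
  rw [trace_adjugate_mul]
  simpa only [smul_eq_mul] using key

/-- if `L` satisfies the Lax equation `dL/dz = LM − ML` on `I` and `L(z) − η·1ₙ`
is invertible on `I`, then `d/dz adj(L − η·1ₙ) = [adj(L − η·1ₙ), M]` on `I`. -/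
theorem lax_adjugate_evolution {n : ℕ} (I : Set ℝ) (L M : ℝ → Mat n)
    (hLax : ∀ z ∈ I, HasDerivAt L (L z * M z - M z * L z) z)
    (η : ℂ) (hinv : ∀ z ∈ I, IsUnit (L z - η • (1 : Mat n))) :
    ∀ z ∈ I, HasDerivAt (fun w => (L w - η • (1 : Mat n)).adjugate)
      ((L z - η • (1 : Mat n)).adjugate * M z - M z * (L z - η • (1 : Mat n)).adjugate) z := by
  intro z hz
  have hA : HasDerivAt (fun w => L w - η • (1 : Mat n)) (L z * M z - M z * L z) z :=
    (hLax z hz).sub_const _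
  set Az : Mat n := L z - η • (1 : Mat n) with hAzdef
  set A' : Mat n := L z * M z - M z * L z with hA'def
  set adjA : Mat n := Matrix.adjugate Az with hadjAdef
  have hcomm : Az * M z - M z * Az = A' := by
    rw [hAzdef, hA'def, sub_mul, mul_sub, smul_mul_assoc, one_mul, mul_smul_comm, mul_one]
    abel
  have hent : ∀ i j, HasDerivAt (fun w => (L w - η • (1 : Mat n)) i j) (A' i j) z :=
    entry_hasDerivAt hA
  have htr0 : (adjA * A').trace = 0 := by
    have t2 : (adjA * (M z * Az)).trace = ((Az * adjA) * M z).trace := by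
      rw [← mul_assoc, Matrix.trace_mul_comm, ← mul_assoc]
    rw [← hcomm, mul_sub, Matrix.trace_sub, ← mul_assoc, Matrix.adjugate_mul, t2,
      Matrix.mul_adjugate, sub_self]
  set D : Mat n := Matrix.of fun i j =>
    (Matrix.adjugate (Az.updateRow j (Pi.single i 1)) * A'.updateRow j 0).trace with hDdef
  have hadj : ∀ i j, HasDerivAt (fun w => (L w - η • (1 : Mat n)).adjugate i j) (D i j) z := by
    intro i j
    simp only [Matrix.adjugate_apply]
    exact jacobi_det fun p q => by
      rcases eq_or_ne p j with hp | hp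
      · have hfun : (fun w => ((L w - η • (1 : Mat n)).updateRow j (Pi.single i 1)) p q)
            = fun _ => (Pi.single i 1 : Fin n → ℂ) q :=
          funext fun w => by rw [Matrix.updateRow_apply, if_pos hp]
        have hval : (A'.updateRow j 0) p q = 0 := by
          rw [Matrix.updateRow_apply, if_pos hp]; rfl
        rw [hfun, hval]
        exact hasDerivAt_const z _
      · have hfun : (fun w => ((L w - η • (1 : Mat n)).updateRow j (Pi.single i 1)) p q)
            = fun w => (L w - η • (1 : Mat n)) p q :=
          funext fun w => by rw [Matrix.updateRow_apply, if_neg hp]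
        have hval : (A'.updateRow j 0) p q = A' p q := by
          rw [Matrix.updateRow_apply, if_neg hp]
        rw [hfun, hval]
        exact hent p q
  have hDmat : A' * adjA + Az * D = 0 := by
    ext i j
    have hL : HasDerivAt
        (fun w => ∑ k, (L w - η • (1 : Mat n)) i k * (L w - η • (1 : Mat n)).adjugate k j)
        (∑ k, (A' i k * adjA k j + Az i k * D k j)) z :=
      HasDerivAt.fun_sum fun k _ => (hent i k).mul (hadj k j)
    have hR : HasDerivAt (fun w => (L w - η • (1 : Mat n)).det * (1 : Mat n) i j)
        ((adjA * A').trace * (1 : Mat n) i j) z :=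
      (jacobi_det hent).mul_const _
    have hfe : (fun w => ∑ k, (L w - η • (1 : Mat n)) i k * (L w - η • (1 : Mat n)).adjugate k j)
        = fun w => (L w - η • (1 : Mat n)).det * (1 : Mat n) i j := by
      funext w
      have hma := Matrix.mul_adjugate (L w - η • (1 : Mat n))
      calc ∑ k, (L w - η • (1 : Mat n)) i k * (L w - η • (1 : Mat n)).adjugate k j
          = ((L w - η • (1 : Mat n)) * (L w - η • (1 : Mat n)).adjugate) i j :=
            (Matrix.mul_apply).symm
        _ = ((L w - η • (1 : Mat n)).det • (1 : Mat n)) i j := by rw [hma]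
        _ = (L w - η • (1 : Mat n)).det * (1 : Mat n) i j := by
            rw [Matrix.smul_apply, smul_eq_mul]
    rw [hfe] at hL
    have huniq := hL.unique hR
    rw [htr0, zero_mul] at huniq
    have : (A' * adjA) i j + (Az * D) i j = 0 := by
      rw [Matrix.mul_apply, Matrix.mul_apply, ← Finset.sum_add_distrib]
      exact huniq
    simpa using this
  have hD : D = adjA * M z - M z * adjA := by
    have h1 : Az * D = -(A' * adjA) := eq_neg_of_add_eq_zero_right hDmat
    refine (hinv z hz).mul_left_cancel ?_
    rw [← hAzdef, h1, ← hcomm]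
    have key1 : Az * adjA = Az.det • (1 : Mat n) := Matrix.mul_adjugate Az
    have e1 : M z * (Az * adjA) = Az.det • M z := by rw [key1, mul_smul_comm, mul_one]
    have e2 : Az * (adjA * M z) = Az.det • M z := by
      rw [← mul_assoc, key1, smul_mul_assoc, one_mul]
    calc -((Az * M z - M z * Az) * adjA)
        = M z * (Az * adjA) - Az * (M z * adjA) := by
          rw [sub_mul, neg_sub, mul_assoc, mul_assoc]
      _ = Az * (adjA * M z) - Az * (M z * adjA) := by rw [e1, e2]
      _ = Az * (adjA * M z - M z * adjA) := (mul_sub _ _ _).symm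
  have hadj' : ∀ i j, HasDerivAt (fun w => (L w - η • (1 : Mat n)).adjugate i j)
      ((adjA * M z - M z * adjA) i j) z := fun i j => hD ▸ hadj i j
  exact hasDerivAt_of_entries hadj'
end
end

section
/- Let L, M : I → Mₙ(ℂ) with L differentiable, let η ∈ ℂ with det(L(z) − η·1ₙ) = 0 for all z ∈ I, and suppose the adjugate satisfies d/dz adj(L − η·1ₙ) = [adj(L − η·1ₙ), M] on I. Let ν ∈ ℂⁿ and suppose there is a continuous scalar function λ : I → ℂ with adj(L(z) − η·1ₙ)·M(z)·ν = λ(z)·adj(L(z) − η·1ₙ)·ν for all z ∈ I, and let h : I → ℂ be differentiable with dh/dz = −λ·h. Then F(z) := h(z)·adj(L(z) − η·1ₙ)·ν satisfies both (L(z) − η·1ₙ)F(z) = 0 and dF/dz + M(z)F(z) = 0 on I. -/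
open Matrix

noncomputable section

attribute [local instance] Matrix.normedAddCommGroup Matrix.normedSpace

/-- `A ↦ A *ᵥ ν` as a continuous (ℝ-)linear map. -/
def mulVecCLM {n : ℕ} (ν : Fin n → ℂ) : Mat n →L[ℝ] (Fin n → ℂ) :=
  LinearMap.toContinuousLinearMap
    { toFun := fun A => A *ᵥ ν
      map_add' := fun A B => Matrix.add_mulVec A B ν
      map_smul' := fun c A => by
        ext i
        simp [Matrix.mulVec, dotProduct, Finset.mul_sum, mul_assoc] }

/-- direct integration of the Lax equations: if `det(L − η·1ₙ) = 0` on `I`, the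
adjugate evolves by `d/dz adj(L − η·1ₙ) = [adj(L − η·1ₙ), M]`, `ν ∈ ℂⁿ`, a continuous scalar `λ`
satisfies `adj(L − η)·M·ν = λ·adj(L − η)·ν`, and `dh/dz = −λ·h`, then
`F := h·adj(L − η·1ₙ)·ν` satisfies `(L − η·1ₙ)F = 0` and `dF/dz + M·F = 0` on `I`. -/
theorem direct_integration_eigenvector {n : ℕ} (I : Set ℝ) (L M : ℝ → Mat n)
    (hL : ∀ z ∈ I, DifferentiableAt ℝ L z)
    (η : ℂ) (hdet : ∀ z ∈ I, det (L z - η • (1 : Mat n)) = 0)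
    (hAdj : ∀ z ∈ I, HasDerivAt (fun w => (L w - η • (1 : Mat n)).adjugate)
      ((L z - η • (1 : Mat n)).adjugate * M z - M z * (L z - η • (1 : Mat n)).adjugate) z)
    (ν : Fin n → ℂ) (lam : ℝ → ℂ) (hlam : ContinuousOn lam I)
    (heig : ∀ z ∈ I, (L z - η • (1 : Mat n)).adjugate *ᵥ (M z *ᵥ ν)
      = lam z • ((L z - η • (1 : Mat n)).adjugate *ᵥ ν))
    (h : ℝ → ℂ) (hh : ∀ z ∈ I, HasDerivAt h (-(lam z) * h z) z) :
    let Fv : ℝ → Fin n → ℂ := fun z => h z • ((L z - η • (1 : Mat n)).adjugate *ᵥ ν)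
    ∀ z ∈ I, (L z - η • (1 : Mat n)) *ᵥ Fv z = 0 ∧
      HasDerivAt Fv (-(M z *ᵥ Fv z)) z := by
  intro Fv z hz
  set A : Mat n := L z - η • (1 : Mat n) with hA
  constructor
  · show A *ᵥ (h z • (A.adjugate *ᵥ ν)) = 0
    rw [Matrix.mulVec_smul, Matrix.mulVec_mulVec, Matrix.mul_adjugate, hdet z hz]
    simp
  · -- derivative of adj ∘ (mulVec ν)
    have hadjv : HasDerivAt (fun w => (L w - η • (1 : Mat n)).adjugate *ᵥ ν)
        ((A.adjugate * M z - M z * A.adjugate) *ᵥ ν) z := by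
      have := ((mulVecCLM ν).hasFDerivAt.comp_hasDerivAt z (hAdj z hz))
      exact this
    have hF : HasDerivAt Fv (h z • ((A.adjugate * M z - M z * A.adjugate) *ᵥ ν)
        + (-(lam z) * h z) • (A.adjugate *ᵥ ν)) z := (hh z hz).smul hadjv
    convert hF using 1
    have h1 : (A.adjugate * M z) *ᵥ ν = lam z • (A.adjugate *ᵥ ν) := by
      rw [← Matrix.mulVec_mulVec]; exact heig z hz
    have h2 : (M z * A.adjugate) *ᵥ ν = M z *ᵥ (A.adjugate *ᵥ ν) :=
      (Matrix.mulVec_mulVec _ _ _).symm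
    show -(M z *ᵥ (h z • (A.adjugate *ᵥ ν))) = _
    rw [Matrix.sub_mulVec, h1, h2, Matrix.mulVec_smul]
    ext i
    simp [smul_sub, Pi.smul_apply, smul_eq_mul]
    ring
end
end

section
/- Let M_N, M_S : I → Mₙ(ℂ) be continuous with M_S(z)† = −M_N(z) for all z ∈ I, and let U_N, U_S : I → Mₙ(ℂ) be differentiable with dU_N/dz = −M_N U_N and dU_S/dz = −M_S U_S. Then D(z) := U_N(z)† U_S(z) is constant on I. If moreover L_N, L_S : I → Mₙ(ℂ) satisfy L_S(z)† = −L_N(z), and there are constant diagonal matrices D_N, D_S with L_N U_N = U_N D_N, L_S U_S = U_S D_S, −D_N† = D_S, and the diagonal entries of D_S are pairwise distinct, then D is a diagonal matrix. -/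
open Matrix

noncomputable section

attribute [local instance] Matrix.normedAddCommGroup Matrix.normedSpace

/-- Entry evaluation as a continuous linear map. -/
def entryCLM {n : ℕ} (k i : Fin n) : Mat n →L[ℝ] ℂ :=
  LinearMap.toContinuousLinearMap
    { toFun := fun A => A k i
      map_add' := fun _ _ => rfl
      map_smul' := fun _ _ => rfl }

/-- with `M_S† = −M_N` and `U_N' = −M_N U_N`, `U_S' = −M_S U_S`, the pairing
`D(z) = U_N(z)† U_S(z)` is constant on the interval `I`; and if additionally `L_S† = −L_N`,
`L_N U_N = U_N D_N`, `L_S U_S = U_S D_S` with constant diagonal `D_N, D_S`, `−D_N† = D_S`, and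
the diagonal entries of `D_S` pairwise distinct, then `D` is diagonal. -/
theorem pairing_constant_and_diagonal {n : ℕ} (I : Set ℝ) (hI : I.OrdConnected)
    (MN MS : ℝ → Mat n) (hMN : ContinuousOn MN I) (hMS : ContinuousOn MS I)
    (hreal : ∀ z ∈ I, (MS z)ᴴ = -MN z)
    (UN US : ℝ → Mat n)
    (hUN : ∀ z ∈ I, HasDerivAt UN (-(MN z * UN z)) z)
    (hUS : ∀ z ∈ I, HasDerivAt US (-(MS z * US z)) z) :
    (∀ z ∈ I, ∀ w ∈ I, (UN z)ᴴ * US z = (UN w)ᴴ * US w) ∧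
    (∀ LN LS : ℝ → Mat n, (∀ z ∈ I, (LS z)ᴴ = -LN z) →
      ∀ DN DS : Mat n, DN.IsDiag → DS.IsDiag →
        (∀ z ∈ I, LN z * UN z = UN z * DN) →
        (∀ z ∈ I, LS z * US z = US z * DS) →
        -DNᴴ = DS →
        (∀ i j : Fin n, i ≠ j → DS i i ≠ DS j j) →
        ∀ z ∈ I, ((UN z)ᴴ * US z).IsDiag) := by
  have hconv : Convex ℝ I := convex_iff_ordConnected.mpr hI
  constructor
  · -- constancy of the pairing
    intro z hz w hw
    ext i j
    set f : ℝ → ℂ := fun z => ∑ k, star (UN z k i) * US z k j with hf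
    have hfentry : ∀ z, ((UN z)ᴴ * US z) i j = f z := by
      intro z
      simp [hf, Matrix.mul_apply, Matrix.conjTranspose_apply]
    have hderiv : ∀ x ∈ I, HasDerivWithinAt f 0 I x := by
      intro x hx
      have hMNH : (MN x)ᴴ = -MS x := by
        have h := hreal x hx
        have h2 : MN x = -(MS x)ᴴ := by rw [h, neg_neg]
        rw [h2, conjTranspose_neg, conjTranspose_conjTranspose]
      have hzero : ((-(MN x * UN x))ᴴ * US x + (UN x)ᴴ * -(MS x * US x)) = 0 := by
        rw [conjTranspose_neg, conjTranspose_mul, hMNH]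
        simp [Matrix.mul_assoc, Matrix.neg_mul, Matrix.mul_neg]
      have hsum : HasDerivAt f
          (∑ k, (star ((-(MN x * UN x)) k i) * US x k j
            + star (UN x k i) * (-(MS x * US x)) k j)) x := by
        apply HasDerivAt.fun_sum
        intro k _
        have h1 : HasDerivAt (fun z => UN z k i) ((-(MN x * UN x)) k i) x :=
          (entryCLM k i).hasFDerivAt.comp_hasDerivAt x (hUN x hx)
        have h2 : HasDerivAt (fun z => US z k j) ((-(MS x * US x)) k j) x :=
          (entryCLM k j).hasFDerivAt.comp_hasDerivAt x (hUS x hx)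
        exact h1.star.mul h2
      have hval : (∑ k, (star ((-(MN x * UN x)) k i) * US x k j
            + star (UN x k i) * (-(MS x * US x)) k j)) = 0 := by
        have : (∑ k, (star ((-(MN x * UN x)) k i) * US x k j
            + star (UN x k i) * (-(MS x * US x)) k j))
            = ((-(MN x * UN x))ᴴ * US x + (UN x)ᴴ * -(MS x * US x)) i j := by
          simp [Matrix.add_apply, Matrix.mul_apply, Matrix.conjTranspose_apply,
            Finset.sum_add_distrib, mul_comm]
        rw [this, hzero]
        simp
      rw [hval] at hsum
      exact hsum.hasDerivWithinAt
    have hle : ‖f z - f w‖ ≤ 0 * ‖z - w‖ :=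
      hconv.norm_image_sub_le_of_norm_hasDerivWithin_le hderiv
        (fun x _ => by simp) hw hz
    rw [zero_mul] at hle
    have : f z = f w := by
      have := norm_sub_eq_zero_iff.mp (le_antisymm hle (norm_nonneg _))
      exact this
    rw [hfentry, hfentry, this]
  · -- diagonality
    intro LN LS hLreal DN DS hDN hDS hLN hLS hDND hdist z hz
    have h1 : (UN z)ᴴ * LS z = DS * (UN z)ᴴ := by
      have hls : (LS z)ᴴ = -LN z := hLreal z hz
      calc (UN z)ᴴ * LS z = ((LS z)ᴴ * UN z)ᴴ := by
            rw [conjTranspose_mul, conjTranspose_conjTranspose]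
        _ = (-(LN z * UN z))ᴴ := by rw [hls, Matrix.neg_mul]
        _ = (-(UN z * DN))ᴴ := by rw [hLN z hz]
        _ = -(DNᴴ * (UN z)ᴴ) := by rw [conjTranspose_neg, conjTranspose_mul]
        _ = DS * (UN z)ᴴ := by rw [← hDND, Matrix.neg_mul]
    set D := (UN z)ᴴ * US z with hD
    have h2 : D * DS = DS * D := by
      calc D * DS = (UN z)ᴴ * (US z * DS) := by rw [hD, Matrix.mul_assoc]
        _ = (UN z)ᴴ * (LS z * US z) := by rw [hLS z hz]
        _ = ((UN z)ᴴ * LS z) * US z := by rw [Matrix.mul_assoc]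
        _ = DS * D := by rw [h1, hD, Matrix.mul_assoc]
    intro i j hij
    have hentry := congrFun (congrFun h2 i) j
    rw [Matrix.mul_apply, Matrix.mul_apply] at hentry
    have hl : ∑ k, D i k * DS k j = D i j * DS j j := by
      refine Finset.sum_eq_single j (fun k _ hk => ?_) (by simp)
      rw [hDS hk, mul_zero]
    have hr : ∑ k, DS i k * D k j = DS i i * D i j := by
      refine Finset.sum_eq_single i (fun k _ hk => ?_) (by simp)
      rw [hDS (Ne.symm hk), zero_mul]
    rw [hl, hr] at hentry
    have hne : DS j j - DS i i ≠ 0 := sub_ne_zero.mpr (Ne.symm (hdist i j hij))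
    have : D i j * (DS j j - DS i i) = 0 := by
      rw [mul_sub, hentry]; ring
    exact (mul_eq_zero.mp this).resolve_right hne
end
end
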